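/- Let L be a set of non-negative reals that is dense in some non-empty open set of reals. Then there exists an FO graph interpretation I=(ν,μ) such that for every finite simple graph G with n ≥ 2 vertices and m edges there exists a finite L-interval graph H with exactly 3n+5+m vertices such that I(H) is isomorphic to G. In particular, the class of all finite graphs has a polynomially bounded FO interpretation in the class of L-interval graphs. -/

import Mathlib

open FirstOrder Language

/-- `ℓ, r` form an interval representation of the simple graph `G`: the vertex `v` is
represented by the half-open interval `[ℓ v, r v)` and two distinct vertices are
adjacent iff their intervals intersect. -/
structure IsIntervalRep {V : Type} (G : SimpleGraph V) (ℓ r : V → ℝ) : Prop where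
  lt : ∀ v, ℓ v < r v
  adj : ∀ u v : V, u ≠ v →
    (G.Adj u v ↔ (Set.Ico (ℓ u) (r u) ∩ Set.Ico (ℓ v) (r v)).Nonempty)

/-- Realization of a graph first-order formula with one free variable in a graph. -/
def gRealize1 {W : Type} (H : SimpleGraph W)
    (ν : Language.graph.Formula (Fin 1)) (w : W) : Prop :=
  letI := H.structure
  ν.Realize (fun _ => w)

/-- Realization of a graph first-order formula with two free variables in a graph. -/
def gRealize2 {W : Type} (H : SimpleGraph W)
    (μ : Language.graph.Formula (Fin 2)) (x y : W) : Prop :=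
  letI := H.structure
  μ.Realize ![x, y]

/-- The graph `I(H)` obtained by applying the FO graph interpretation `I = (ν, μ)` to
`H`: its vertices are the vertices `v` of `H` satisfying `ν(v)` and its edges are the
pairs `{u, v}` of distinct vertices satisfying `μ(u, v)` (for symmetric `μ`, the
symmetrization performed by `SimpleGraph.fromRel` does not change the edge set). -/
def interpGraph {W : Type} (H : SimpleGraph W)
    (ν : Language.graph.Formula (Fin 1)) (μ : Language.graph.Formula (Fin 2)) :
    SimpleGraph {w : W // gRealize1 H ν w} :=
  SimpleGraph.fromRel (fun u v => gRealize2 H μ u.1 v.1)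

namespace IGP

abbrev GFormula (α : Type) := Language.graph.Formula α
def adjF {α : Type} (a b : α) : GFormula α :=
  Relations.formula₂ (Language.adj) (Term.var a) (Term.var b)
def eqF {α : Type} (a b : α) : GFormula α := Term.equal (Term.var a) (Term.var b)
noncomputable def exU {α : Type} (φ : GFormula (α ⊕ Unit)) : GFormula α := φ.iExs Unit
noncomputable def alU {α : Type} (φ : GFormula (α ⊕ Unit)) : GFormula α := φ.iAlls Unit
variable {W : Type} (H : SimpleGraph W)
def Rl {α : Type} (φ : GFormula α) (v : α → W) : Prop :=
  letI := H.structure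
  φ.Realize v
section
variable {α β : Type}
lemma Rl_adj (a b : α) (v : α → W) : Rl H (adjF a b) v ↔ H.Adj (v a) (v b) := by
  letI := H.structure
  rw [Rl, adjF, Formula.realize_rel₂]; rfl
lemma Rl_eq (a b : α) (v : α → W) : Rl H (eqF a b) v ↔ v a = v b := by
  letI := H.structure
  rw [Rl, eqF, Formula.realize_equal]; rfl
lemma Rl_inf (φ ψ : GFormula α) (v : α → W) : Rl H (φ ⊓ ψ) v ↔ Rl H φ v ∧ Rl H ψ v := by
  letI := H.structure; exact Formula.realize_inf
lemma Rl_sup (φ ψ : GFormula α) (v : α → W) : Rl H (φ ⊔ ψ) v ↔ Rl H φ v ∨ Rl H ψ v := by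
  letI := H.structure; exact Formula.realize_sup
lemma Rl_imp (φ ψ : GFormula α) (v : α → W) : Rl H (φ.imp ψ) v ↔ (Rl H φ v → Rl H ψ v) := by
  letI := H.structure; exact Formula.realize_imp
lemma Rl_iff (φ ψ : GFormula α) (v : α → W) : Rl H (φ.iff ψ) v ↔ (Rl H φ v ↔ Rl H ψ v) := by
  letI := H.structure; exact Formula.realize_iff
lemma Rl_not (φ : GFormula α) (v : α → W) : Rl H (∼φ) v ↔ ¬ Rl H φ v := by
  letI := H.structure; exact Formula.realize_not
lemma Rl_relabel (g : α → β) (φ : GFormula α) (v : β → W) :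
    Rl H (φ.relabel g) v ↔ Rl H φ (v ∘ g) := by
  letI := H.structure; exact Formula.realize_relabel
lemma Rl_exU (φ : GFormula (α ⊕ Unit)) (v : α → W) :
    Rl H (exU φ) v ↔ ∃ x : W, Rl H φ (Sum.elim v (fun _ => x)) := by
  letI := H.structure
  rw [Rl, exU, Formula.realize_iExs]
  constructor
  · rintro ⟨i, h⟩
    refine ⟨i (), ?_⟩
    have : (Sum.elim v fun _ => i ()) = fun a : α ⊕ Unit => Sum.elim v i (id a) := by
      funext a; rcases a with a | a <;> rfl
    rw [Rl, this]; exact h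
  · rintro ⟨x, h⟩
    refine ⟨fun _ => x, ?_⟩
    have : (fun a : α ⊕ Unit => Sum.elim v (fun _ => x) (id a)) = Sum.elim v (fun _ => x) := by
      funext a; rcases a with a | a <;> rfl
    exact h
lemma Rl_alU (φ : GFormula (α ⊕ Unit)) (v : α → W) :
    Rl H (alU φ) v ↔ ∀ x : W, Rl H φ (Sum.elim v (fun _ => x)) := by
  letI := H.structure
  rw [Rl, alU, Formula.realize_iAlls]
  constructor
  · intro h x
    have := h (fun _ => x)
    have e : (fun a : α ⊕ Unit => Sum.elim v (fun _ : Unit => x) (id a))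
        = Sum.elim v (fun _ => x) := by
      funext a; rcases a with a | a <;> rfl
    rw [Rl, ← e]; exact this
  · intro h i
    have e : (fun a : α ⊕ Unit => Sum.elim v i (id a)) = Sum.elim v (fun _ => i ()) := by
      funext a; rcases a with a | a <;> rfl
    exact h (i ())
end

/-! ### The concrete formulas -/

noncomputable def deg1F : GFormula (Fin 1) :=
  exU ((adjF (.inl 0) (.inr ())) ⊓
    alU ((adjF (.inl (.inl 0)) (.inr ())).imp (eqF (.inr ()) (.inl (.inr ())))))

noncomputable def deg2F : GFormula (Fin 1) :=
  exU (exU ((((∼(eqF (Sum.inl (Sum.inr ())) (Sum.inr ()))) ⊓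
      adjF (Sum.inl (Sum.inl 0)) (Sum.inl (Sum.inr ()))) ⊓
      adjF (Sum.inl (Sum.inl 0)) (Sum.inr ())) ⊓
    alU ((adjF (Sum.inl (Sum.inl (Sum.inl 0))) (Sum.inr ())).imp
      ((eqF (Sum.inr ()) (Sum.inl (Sum.inl (Sum.inr ())))) ⊔
       (eqF (Sum.inr ()) (Sum.inl (Sum.inr ())))))))

noncomputable def deg3F : GFormula (Fin 1) :=
  exU (exU (exU (
    ((((((∼(eqF (Sum.inl (Sum.inl (Sum.inr ()))) (Sum.inl (Sum.inr ())))) ⊓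
      (∼(eqF (Sum.inl (Sum.inl (Sum.inr ()))) (Sum.inr ())))) ⊓
      (∼(eqF (Sum.inl (Sum.inr ())) (Sum.inr ())))) ⊓
      adjF (Sum.inl (Sum.inl (Sum.inl 0))) (Sum.inl (Sum.inl (Sum.inr ())))) ⊓
      adjF (Sum.inl (Sum.inl (Sum.inl 0))) (Sum.inl (Sum.inr ()))) ⊓
      adjF (Sum.inl (Sum.inl (Sum.inl 0))) (Sum.inr ())))))

noncomputable def hasD2F : GFormula (Fin 1) :=
  exU ((adjF (.inl 0) (.inr ())) ⊓ (deg2F.relabel (fun _ => Sum.inr ())))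

noncomputable def hasD1F : GFormula (Fin 1) :=
  exU ((adjF (.inl 0) (.inr ())) ⊓ (deg1F.relabel (fun _ => Sum.inr ())))

noncomputable def nuF : GFormula (Fin 1) :=
  deg3F ⊓ exU ((adjF (.inl 0) (.inr ())) ⊓ (hasD2F.relabel (fun _ => Sum.inr ())))

noncomputable def col2F : GFormula (Fin 1) :=
  (deg3F ⊓ exU ((adjF (.inl 0) (.inr ())) ⊓ (hasD1F.relabel (fun _ => Sum.inr ())))) ⊓ ∼hasD2F

noncomputable def col1F : GFormula (Fin 1) :=
  (((deg3F ⊓ ∼nuF) ⊓ ∼col2F) ⊓ ∼hasD1F) ⊓ ∼hasD2F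

noncomputable def nleqF : GFormula (Fin 2) :=
  alU (((((∼(eqF (Sum.inr ()) (Sum.inl 0)))) ⊓ (∼(eqF (Sum.inr ()) (Sum.inl 1)))) ⊓
    (adjF (Sum.inr ()) (Sum.inl 0))).imp (adjF (Sum.inr ()) (Sum.inl 1)))

noncomputable def minVF : GFormula (Fin 2) :=
  ((nuF.relabel (fun _ => (0 : Fin 2))) ⊓ adjF 1 0) ⊓
    alU ((((nuF.relabel (fun _ => (Sum.inr () : Fin 2 ⊕ Unit))) ⊓
      (adjF (Sum.inl 1) (Sum.inr ())))).imp (nleqF.relabel ![Sum.inl 0, Sum.inr ()]))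

noncomputable def maxMF : GFormula (Fin 2) :=
  ((col2F.relabel (fun _ => (0 : Fin 2))) ⊓ adjF 1 0) ⊓
    alU ((((col2F.relabel (fun _ => (Sum.inr () : Fin 2 ⊕ Unit))) ⊓
      (adjF (Sum.inl 1) (Sum.inr ())))).imp (nleqF.relabel ![Sum.inl 0, Sum.inr ()]))

noncomputable def sameVF : GFormula (Fin 2) :=
  alU ((nuF.relabel (fun _ => (Sum.inr () : Fin 2 ⊕ Unit))).imp
    ((adjF (Sum.inl 0) (Sum.inr ())).iff (adjF (Sum.inl 1) (Sum.inr ()))))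

noncomputable def isPF : GFormula (Fin 1) :=
  alU (((col1F.relabel (fun _ => (Sum.inr () : Fin 1 ⊕ Unit))) ⊓
      (sameVF.relabel ![Sum.inl 0, Sum.inr ()])).imp
    (alU (((col2F.relabel (fun _ => (Sum.inr () : (Fin 1 ⊕ Unit) ⊕ Unit))) ⊓
        (adjF (Sum.inl (Sum.inl 0)) (Sum.inr ()))).imp
      (adjF (Sum.inl (Sum.inr ())) (Sum.inr ())))))

noncomputable def matchedF : GFormula (Fin 2) :=
  exU ((((col1F.relabel (fun _ => (Sum.inr () : Fin 2 ⊕ Unit))) ⊓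
    (isPF.relabel (fun _ => (Sum.inr () : Fin 2 ⊕ Unit)))) ⊓
    (minVF.relabel ![Sum.inl 0, Sum.inr ()])) ⊓
    (maxMF.relabel ![Sum.inl 1, Sum.inr ()]))

noncomputable def halfF : GFormula (Fin 2) :=
  exU ((((col1F.relabel (fun _ => (Sum.inr () : Fin 2 ⊕ Unit))) ⊓
    (∼(isPF.relabel (fun _ => (Sum.inr () : Fin 2 ⊕ Unit))))) ⊓
    (minVF.relabel ![Sum.inl 0, Sum.inr ()])) ⊓
    exU ((maxMF.relabel ![Sum.inr (), Sum.inl (Sum.inr ())]) ⊓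
      (matchedF.relabel ![Sum.inl (Sum.inl 1), Sum.inr ()])))

noncomputable def muF : GFormula (Fin 2) := halfF ⊔ (halfF.relabel ![1, 0])

/-! ### Semantic predicates -/

def Sdeg1 (x : W) : Prop := ∃ z, H.Adj x z ∧ ∀ t, H.Adj x t → t = z
def Sdeg2 (x : W) : Prop :=
  ∃ z w, (z ≠ w ∧ H.Adj x z) ∧ H.Adj x w ∧ ∀ t, H.Adj x t → t = z ∨ t = w
def Sdeg3 (x : W) : Prop :=
  ∃ a b c, ((a ≠ b ∧ a ≠ c ∧ b ≠ c) ∧ H.Adj x a) ∧ H.Adj x b ∧ H.Adj x c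
def ShasD2 (x : W) : Prop := ∃ a, H.Adj x a ∧ Sdeg2 H a
def ShasD1 (x : W) : Prop := ∃ a, H.Adj x a ∧ Sdeg1 H a
def Snu (x : W) : Prop := Sdeg3 H x ∧ ∃ a, H.Adj x a ∧ ShasD2 H a
def Scol2 (x : W) : Prop := (Sdeg3 H x ∧ ∃ a, H.Adj x a ∧ ShasD1 H a) ∧ ¬ ShasD2 H x
def Scol1 (x : W) : Prop :=
  (((Sdeg3 H x ∧ ¬ Snu H x) ∧ ¬ Scol2 H x) ∧ ¬ ShasD1 H x) ∧ ¬ ShasD2 H x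
def Snleq (v v' : W) : Prop := ∀ e, e ≠ v → e ≠ v' → H.Adj e v → H.Adj e v'
def SminV (v e : W) : Prop :=
  (Snu H v ∧ H.Adj e v) ∧ ∀ v', Snu H v' → H.Adj e v' → Snleq H v v'
def SmaxM (m e : W) : Prop :=
  (Scol2 H m ∧ H.Adj e m) ∧ ∀ m', Scol2 H m' → H.Adj e m' → Snleq H m m'
def SsameV (e e' : W) : Prop := ∀ v, Snu H v → (H.Adj e v ↔ H.Adj e' v)
def SisP (e : W) : Prop :=
  ∀ e', Scol1 H e' → SsameV H e e' → ∀ m, Scol2 H m → H.Adj e m → H.Adj e' m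
def Smatch (v m : W) : Prop :=
  ∃ p, ((Scol1 H p ∧ SisP H p) ∧ SminV H v p) ∧ SmaxM H m p
def Shalf (x y : W) : Prop :=
  ∃ e, ((Scol1 H e ∧ ¬ SisP H e) ∧ SminV H x e) ∧ ∃ m, SmaxM H m e ∧ Smatch H y m
def Smu (x y : W) : Prop := Shalf H x y ∨ Shalf H y x

/-! ### Realization lemmas -/

lemma Rl_deg1 (v : Fin 1 → W) : Rl H deg1F v ↔ Sdeg1 H (v 0) := by
  simp [deg1F, Rl_exU, Rl_alU, Rl_inf, Rl_imp, Rl_adj, Rl_eq, Sdeg1]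

lemma Rl_deg2 (v : Fin 1 → W) : Rl H deg2F v ↔ Sdeg2 H (v 0) := by
  simp [deg2F, Rl_exU, Rl_alU, Rl_inf, Rl_imp, Rl_sup, Rl_not, Rl_adj, Rl_eq, Sdeg2]
  tauto

lemma Rl_deg3 (v : Fin 1 → W) : Rl H deg3F v ↔ Sdeg3 H (v 0) := by
  simp [deg3F, Rl_exU, Rl_inf, Rl_not, Rl_adj, Rl_eq, Sdeg3]
  tauto

lemma Rl_hasD2 (v : Fin 1 → W) : Rl H hasD2F v ↔ ShasD2 H (v 0) := by
  simp [hasD2F, Rl_exU, Rl_inf, Rl_adj, Rl_relabel, Rl_deg2, ShasD2]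

lemma Rl_hasD1 (v : Fin 1 → W) : Rl H hasD1F v ↔ ShasD1 H (v 0) := by
  simp [hasD1F, Rl_exU, Rl_inf, Rl_adj, Rl_relabel, Rl_deg1, ShasD1]

lemma Rl_nu (v : Fin 1 → W) : Rl H nuF v ↔ Snu H (v 0) := by
  simp [nuF, Rl_exU, Rl_inf, Rl_adj, Rl_relabel, Rl_deg3, Rl_hasD2, Snu]

lemma Rl_col2 (v : Fin 1 → W) : Rl H col2F v ↔ Scol2 H (v 0) := by
  simp [col2F, Rl_exU, Rl_inf, Rl_not, Rl_adj, Rl_relabel, Rl_deg3, Rl_hasD1, Rl_hasD2, Scol2]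

lemma Rl_col1 (v : Fin 1 → W) : Rl H col1F v ↔ Scol1 H (v 0) := by
  simp [col1F, Rl_inf, Rl_not, Rl_deg3, Rl_nu, Rl_col2, Rl_hasD1, Rl_hasD2, Scol1]

lemma Rl_nleq (v : Fin 2 → W) : Rl H nleqF v ↔ Snleq H (v 0) (v 1) := by
  simp [nleqF, Rl_alU, Rl_imp, Rl_inf, Rl_not, Rl_adj, Rl_eq, Snleq]

lemma Rl_minV (v : Fin 2 → W) : Rl H minVF v ↔ SminV H (v 0) (v 1) := by
  simp [minVF, Rl_alU, Rl_inf, Rl_imp, Rl_adj, Rl_relabel, Rl_nu, Rl_nleq, SminV]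

lemma Rl_maxM (v : Fin 2 → W) : Rl H maxMF v ↔ SmaxM H (v 0) (v 1) := by
  simp [maxMF, Rl_alU, Rl_inf, Rl_imp, Rl_adj, Rl_relabel, Rl_col2, Rl_nleq, SmaxM]

lemma Rl_sameV (v : Fin 2 → W) : Rl H sameVF v ↔ SsameV H (v 0) (v 1) := by
  simp [sameVF, Rl_alU, Rl_imp, Rl_iff, Rl_adj, Rl_relabel, Rl_nu, SsameV]

lemma Rl_isP (v : Fin 1 → W) : Rl H isPF v ↔ SisP H (v 0) := by
  simp [isPF, Rl_alU, Rl_imp, Rl_inf, Rl_adj, Rl_relabel, Rl_col1, Rl_col2, Rl_sameV, SisP]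

lemma Rl_matched (v : Fin 2 → W) : Rl H matchedF v ↔ Smatch H (v 0) (v 1) := by
  simp [matchedF, Rl_exU, Rl_inf, Rl_relabel, Rl_col1, Rl_isP, Rl_minV, Rl_maxM, Smatch]

lemma Rl_half (v : Fin 2 → W) : Rl H halfF v ↔ Shalf H (v 0) (v 1) := by
  simp [halfF, Rl_exU, Rl_inf, Rl_not, Rl_relabel, Rl_col1, Rl_isP, Rl_minV, Rl_maxM,
    Rl_matched, Shalf]

lemma Rl_mu (v : Fin 2 → W) : Rl H muF v ↔ Smu H (v 0) (v 1) := by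
  simp [muF, Rl_sup, Rl_relabel, Rl_half, Smu]




/-! ### vertex kinds -/

inductive TK (V E : Type) : Type
  | a2 | a1 | a0 | z0 | z1
  | vtx (v : V)
  | mid (q : V ⊕ E)
  | mv (v : V)

def AdjT {V E : Type} {n : ℕ} (oV : V → Fin n) (eI fI : E → Fin n) :
    TK V E → TK V E → Prop
  | .a2, .a1 => True
  | .a1, .a2 => True
  | .a1, .a0 => True
  | .a0, .a1 => True
  | .a0, .vtx _ => True
  | .vtx _, .a0 => True
  | .vtx _, .vtx _ => True
  | .vtx v, .mid q => Sum.elim oV eI q ≤ oV v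
  | .mid q, .vtx v => Sum.elim oV eI q ≤ oV v
  | .mid _, .mid _ => True
  | .mid q, .mv v => oV v ≤ Sum.elim oV fI q
  | .mv v, .mid q => oV v ≤ Sum.elim oV fI q
  | .mv _, .mv _ => True
  | .mv _, .z0 => True
  | .z0, .mv _ => True
  | .z0, .z1 => True
  | .z1, .z0 => True
  | _, _ => False

/-! ### geometric data -/

/-- real value of a middle index -/
def idxR {V E : Type} {n : ℕ} (oV : V → Fin n) (eI : E → Fin n) (q : V ⊕ E) : ℝ :=
  ((Sum.elim oV eI q : Fin n) : ℕ)

/-- left endpoints -/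
def lpos {V E : Type} {n : ℕ} (oV : V → Fin n) (eI : E → Fin n) (d u : ℝ) :
    TK V E → ℝ
  | .a2 => -2*d - 4*u
  | .a1 => -d - 4*u
  | .a0 => -d
  | .z0 => 2*d + (4*(n:ℝ) + 4)*u
  | .z1 => 3*d + (4*(n:ℝ) + 6)*u
  | .vtx _ => 0
  | .mid q => d + (4*(idxR oV eI q) + 3)*u
  | .mv v => 2*d + (4*(((oV v : ℕ) : ℝ)) + 4)*u

/-- lower ends of the length windows -/
def wlo {V E : Type} {n : ℕ} (oV : V → Fin n) (eI fI : E → Fin n) (d u : ℝ) :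
    TK V E → ℝ
  | .a2 => d
  | .a1 => d
  | .a0 => d + u
  | .z0 => d + (4*(n:ℝ) + 4)*u
  | .z1 => d
  | .vtx v => d + (4*(((oV v : ℕ) : ℝ)) + 4)*u
  | .mid q => d + (4*(idxR oV fI q - idxR oV eI q) + 2)*u
  | .mv _ => d

/-- upper ends of the length windows -/
def whi {V E : Type} {n : ℕ} (oV : V → Fin n) (eI fI : E → Fin n) (d u : ℝ) :
    TK V E → ℝ
  | .a2 => d + u
  | .a1 => d + u
  | .a0 => d + 2*u
  | .z0 => d + (4*(n:ℝ) + 5)*u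
  | .z1 => d + u
  | .vtx v => d + (4*(((oV v : ℕ) : ℝ)) + 6)*u
  | .mid q => d + (4*(idxR oV fI q - idxR oV eI q) + 3)*u
  | .mv _ => d + u

structure Ctx (V E W : Type) (n : ℕ) where
  oV : V ≃ Fin n
  eI : E → Fin n
  fI : E → Fin n
  κ : W ≃ TK V E
  H : SimpleGraph W
  hadj : ∀ x y : W, H.Adj x y ↔ (κ x ≠ κ y ∧ AdjT (oV ·) eI fI (κ x) (κ y))
  hn : 2 ≤ n
  hef : ∀ s, eI s < fI s

namespace Ctx

variable {V E W : Type} {n : ℕ} (C : Ctx V E W n)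

/-- index `i` of a middle vertex -/
def iI : V ⊕ E → Fin n := Sum.elim (C.oV ·) C.eI
/-- index `j` of a middle vertex -/
def jI : V ⊕ E → Fin n := Sum.elim (C.oV ·) C.fI

lemma hij (q : V ⊕ E) : C.iI q ≤ C.jI q := by
  rcases q with v | s
  · exact le_refl _
  · exact (C.hef s).le

lemma hadj' (x y : W) : C.H.Adj x y ↔ (C.κ x ≠ C.κ y ∧ AdjT (C.oV ·) C.eI C.fI (C.κ x) (C.κ y)) :=
  C.hadj x y

lemma adj_symm_right (x : W) (t : TK V E) :
    C.H.Adj x (C.κ.symm t) ↔ (C.κ x ≠ t ∧ AdjT (C.oV ·) C.eI C.fI (C.κ x) t) := by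
  rw [C.hadj]; simp

include C in
lemma npos : 0 < n := by have := C.hn; omega

/-- the canonical first vertex -/
def v₀ : V := C.oV.symm ⟨0, C.npos⟩
/-- the canonical second vertex -/
def v₁ : V := C.oV.symm ⟨1, by have := C.hn; omega⟩
/-- the canonical last vertex -/
def vL : V := C.oV.symm ⟨n-1, by have := C.npos; omega⟩

lemma v01 : C.v₀ ≠ C.v₁ := by
  intro h
  have := congrArg C.oV h
  simp only [v₀, v₁, Equiv.apply_symm_apply, Fin.mk.injEq] at this
  omega

lemma oV_v0_le (k : Fin n) : C.oV C.v₀ ≤ k := by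
  simp [v₀, Fin.le_def]

lemma le_oV_vL (k : Fin n) : k ≤ C.oV C.vL := by
  have := k.isLt
  simp only [vL, Equiv.apply_symm_apply, Fin.le_def]
  omega

lemma symm_ne {s t : TK V E} (h : s ≠ t) : C.κ.symm s ≠ C.κ.symm t :=
  fun e => h (C.κ.symm.injective e)

lemma eq_symm_of_κ {t : W} {s : TK V E} (h : C.κ t = s) : t = C.κ.symm s := by
  rw [← h]; simp

lemma κ_ne_of_ne {x : W} {t : TK V E} (h : x ≠ C.κ.symm t) : C.κ x ≠ t :=
  fun hh => h (C.eq_symm_of_κ hh)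

lemma adjS (s t : TK V E) (h1 : s ≠ t) (h2 : AdjT (C.oV ·) C.eI C.fI s t) :
    C.H.Adj (C.κ.symm s) (C.κ.symm t) := by
  rw [C.hadj]; simpa using ⟨h1, h2⟩

lemma adj_symm_symm (s t : TK V E) :
    C.H.Adj (C.κ.symm s) (C.κ.symm t) ↔ (s ≠ t ∧ AdjT (C.oV ·) C.eI C.fI s t) := by
  rw [C.hadj]; simp

/-! ### neighbour classification for the special vertices -/

lemma nbr_a2 {x t : W} (hx : C.κ x = .a2) (h : C.H.Adj x t) : C.κ t = .a1 := by
  rw [C.hadj] at h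
  obtain ⟨hne, ha⟩ := h
  rw [hx] at ha
  cases ht : C.κ t <;> rw [ht] at ha
  all_goals first | rfl | exact ha.elim

lemma nbr_z1 {x t : W} (hx : C.κ x = .z1) (h : C.H.Adj x t) : C.κ t = .z0 := by
  rw [C.hadj] at h
  obtain ⟨hne, ha⟩ := h
  rw [hx] at ha
  cases ht : C.κ t <;> rw [ht] at ha
  all_goals first | rfl | exact ha.elim

lemma nbr_a1 {x t : W} (hx : C.κ x = .a1) (h : C.H.Adj x t) :
    C.κ t = .a2 ∨ C.κ t = .a0 := by
  rw [C.hadj] at h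
  obtain ⟨hne, ha⟩ := h
  rw [hx] at ha
  cases ht : C.κ t <;> rw [ht] at ha
  all_goals first | exact Or.inl rfl | exact Or.inr rfl | exact ha.elim

lemma nbr_z0 {x t : W} (hx : C.κ x = .z0) (h : C.H.Adj x t) :
    C.κ t = .z1 ∨ ∃ v, C.κ t = .mv v := by
  rw [C.hadj] at h
  obtain ⟨hne, ha⟩ := h
  rw [hx] at ha
  cases ht : C.κ t <;> rw [ht] at ha
  all_goals first | exact Or.inl rfl | exact Or.inr ⟨_, rfl⟩ | exact ha.elim

lemma nbr_a0' {x t : W} (hx : C.κ x = .a0) (h : C.H.Adj x t) :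
    C.κ t = .a1 ∨ ∃ v, C.κ t = .vtx v := by
  rw [C.hadj] at h
  obtain ⟨hne, ha⟩ := h
  rw [hx] at ha
  cases ht : C.κ t <;> rw [ht] at ha
  all_goals first | exact Or.inl rfl | exact Or.inr ⟨_, rfl⟩ | exact ha.elim

/-! ### helpers refuting small degrees -/

lemma not_deg1_of_two {x t1 t2 : W} (h1 : C.H.Adj x t1) (h2 : C.H.Adj x t2)
    (h12 : t1 ≠ t2) : ¬ Sdeg1 C.H x := by
  rintro ⟨z, _, hu⟩
  exact h12 ((hu _ h1).trans (hu _ h2).symm)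

lemma not_deg2_of_three {x a b c : W} (ha : C.H.Adj x a) (hb : C.H.Adj x b)
    (hc : C.H.Adj x c) (hab : a ≠ b) (hac : a ≠ c) (hbc : b ≠ c) :
    ¬ Sdeg2 C.H x := by
  rintro ⟨z, w, ⟨hzw, _⟩, _, hu⟩
  rcases hu a ha with rfl | rfl <;> rcases hu b hb with rfl | rfl <;>
    rcases hu c hc with rfl | rfl <;> simp_all

lemma not_deg3_of_two {x p q : W} (hsub : ∀ t, C.H.Adj x t → t = p ∨ t = q) :
    ¬ Sdeg3 C.H x := by
  rintro ⟨a, b, c, ⟨⟨hab, hac, hbc⟩, ha⟩, hb, hc⟩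
  rcases hsub a ha with rfl | rfl <;> rcases hsub b hb with rfl | rfl <;>
    rcases hsub c hc with rfl | rfl <;> simp_all

/-! ### three distinct neighbours for the big-degree kinds -/

lemma three_nbrs {x : W} (h2 : C.κ x ≠ .a2) (h1 : C.κ x ≠ .a1) (hz : C.κ x ≠ .z1) :
    Sdeg3 C.H x := by
  classical
  cases hx : C.κ x
  case a2 => exact absurd hx h2
  case a1 => exact absurd hx h1
  case z1 => exact absurd hx hz
  case a0 =>
    refine ⟨C.κ.symm .a1, C.κ.symm (.vtx C.v₀), C.κ.symm (.vtx C.v₁),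
      ⟨⟨C.symm_ne (by simp), C.symm_ne (by simp), C.symm_ne (by simp [C.v01])⟩, ?_⟩, ?_, ?_⟩ <;>
      · rw [C.adj_symm_right]
        exact ⟨by simp [hx], by rw [hx]; trivial⟩
  case vtx v =>
    have hv' : v ≠ (if v = C.v₀ then C.v₁ else C.v₀) := by
      by_cases hc : v = C.v₀
      · rw [if_pos hc, hc]; exact C.v01
      · rw [if_neg hc]; exact hc
    refine ⟨C.κ.symm .a0, C.κ.symm (.mid (.inl C.v₀)),
      C.κ.symm (.vtx (if v = C.v₀ then C.v₁ else C.v₀)),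
      ⟨⟨C.symm_ne (by simp), C.symm_ne (by simp), C.symm_ne (by simp)⟩, ?_⟩, ?_, ?_⟩ <;>
      rw [C.adj_symm_right]
    · exact ⟨by simp [hx], by rw [hx]; trivial⟩
    · exact ⟨by simp [hx], by rw [hx]; exact C.oV_v0_le _⟩
    · exact ⟨by simp [hx, hv'], by rw [hx]; trivial⟩
  case mid q =>
    have hq' : q ≠ (if q = .inl C.v₀ then .inl C.v₁ else .inl C.v₀) := by
      by_cases hc : q = .inl C.v₀
      · rw [if_pos hc, hc]; simp [C.v01]
      · rw [if_neg hc]; exact hc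
    refine ⟨C.κ.symm (.vtx C.vL), C.κ.symm (.mv C.v₀),
      C.κ.symm (.mid (if q = .inl C.v₀ then .inl C.v₁ else .inl C.v₀)),
      ⟨⟨C.symm_ne (by simp), C.symm_ne (by simp), C.symm_ne (by simp)⟩, ?_⟩, ?_, ?_⟩ <;>
      rw [C.adj_symm_right]
    · exact ⟨by simp [hx], by rw [hx]; exact C.le_oV_vL _⟩
    · exact ⟨by simp [hx], by rw [hx]; exact C.oV_v0_le _⟩
    · exact ⟨by simp [hx, hq'], by rw [hx]; trivial⟩
  case mv v =>
    have hv' : v ≠ (if v = C.v₀ then C.v₁ else C.v₀) := by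
      by_cases hc : v = C.v₀
      · rw [if_pos hc, hc]; exact C.v01
      · rw [if_neg hc]; exact hc
    refine ⟨C.κ.symm .z0, C.κ.symm (.mid (.inl C.vL)),
      C.κ.symm (.mv (if v = C.v₀ then C.v₁ else C.v₀)),
      ⟨⟨C.symm_ne (by simp), C.symm_ne (by simp), C.symm_ne (by simp)⟩, ?_⟩, ?_, ?_⟩ <;>
      rw [C.adj_symm_right]
    · exact ⟨by simp [hx], by rw [hx]; trivial⟩
    · exact ⟨by simp [hx], by rw [hx]; exact C.le_oV_vL _⟩
    · exact ⟨by simp [hx, hv'], by rw [hx]; trivial⟩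
  case z0 =>
    refine ⟨C.κ.symm .z1, C.κ.symm (.mv C.v₀), C.κ.symm (.mv C.v₁),
      ⟨⟨C.symm_ne (by simp), C.symm_ne (by simp), C.symm_ne (by simp [C.v01])⟩, ?_⟩, ?_, ?_⟩ <;>
      · rw [C.adj_symm_right]
        exact ⟨by simp [hx], by rw [hx]; trivial⟩

/-! ### characterizations -/

lemma charDeg1 (x : W) : Sdeg1 C.H x ↔ (C.κ x = .a2 ∨ C.κ x = .z1) := by
  constructor
  · intro hd
    cases hx : C.κ x
    case a2 => exact Or.inl rfl
    case z1 => exact Or.inr rfl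
    case a1 =>
      exact absurd hd (C.not_deg1_of_two
        ((C.adj_symm_right x .a2).mpr ⟨by simp [hx], by rw [hx]; trivial⟩)
        ((C.adj_symm_right x .a0).mpr ⟨by simp [hx], by rw [hx]; trivial⟩)
        (C.symm_ne (by simp)))
    all_goals
      obtain ⟨t1, t2, t3, ⟨⟨h12, _, _⟩, a1⟩, a2, a3⟩ := C.three_nbrs
        (by rw [hx]; simp) (by rw [hx]; simp) (by rw [hx]; simp)
      exact absurd hd (C.not_deg1_of_two a1 a2 h12)
  · rintro (hx | hx)
    · refine ⟨C.κ.symm .a1,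
        (C.adj_symm_right x .a1).mpr ⟨by simp [hx], by rw [hx]; trivial⟩, ?_⟩
      intro t ht
      exact C.eq_symm_of_κ (C.nbr_a2 hx ht)
    · refine ⟨C.κ.symm .z0,
        (C.adj_symm_right x .z0).mpr ⟨by simp [hx], by rw [hx]; trivial⟩, ?_⟩
      intro t ht
      exact C.eq_symm_of_κ (C.nbr_z1 hx ht)

lemma charDeg2 (x : W) : Sdeg2 C.H x ↔ C.κ x = .a1 := by
  constructor
  · intro hd
    cases hx : C.κ x
    case a1 => rfl
    case a2 =>
      exfalso
      obtain ⟨z, w, ⟨hzw, hz⟩, hw, _⟩ := hd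
      exact hzw ((C.eq_symm_of_κ (C.nbr_a2 hx hz)).trans
        (C.eq_symm_of_κ (C.nbr_a2 hx hw)).symm)
    case z1 =>
      exfalso
      obtain ⟨z, w, ⟨hzw, hz⟩, hw, _⟩ := hd
      exact hzw ((C.eq_symm_of_κ (C.nbr_z1 hx hz)).trans
        (C.eq_symm_of_κ (C.nbr_z1 hx hw)).symm)
    all_goals
      obtain ⟨t1, t2, t3, ⟨⟨h12, h13, h23⟩, a1⟩, a2, a3⟩ := C.three_nbrs
        (by rw [hx]; simp) (by rw [hx]; simp) (by rw [hx]; simp)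
      exact absurd hd (C.not_deg2_of_three a1 a2 a3 h12 h13 h23)
  · intro hx
    refine ⟨C.κ.symm .a2, C.κ.symm .a0,
      ⟨C.symm_ne (by simp),
        (C.adj_symm_right x .a2).mpr ⟨by simp [hx], by rw [hx]; trivial⟩⟩,
      (C.adj_symm_right x .a0).mpr ⟨by simp [hx], by rw [hx]; trivial⟩, ?_⟩
    intro t ht
    rcases C.nbr_a1 hx ht with h | h
    · exact Or.inl (C.eq_symm_of_κ h)
    · exact Or.inr (C.eq_symm_of_κ h)

lemma charDeg3 (x : W) : Sdeg3 C.H x ↔ (C.κ x ≠ .a2 ∧ C.κ x ≠ .a1 ∧ C.κ x ≠ .z1) := by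
  constructor
  · intro hd
    cases hx : C.κ x
    case a2 =>
      exact absurd hd (C.not_deg3_of_two (p := C.κ.symm .a1) (q := C.κ.symm .a1)
        (fun t ht => Or.inl (C.eq_symm_of_κ (C.nbr_a2 hx ht))))
    case z1 =>
      exact absurd hd (C.not_deg3_of_two (p := C.κ.symm .z0) (q := C.κ.symm .z0)
        (fun t ht => Or.inl (C.eq_symm_of_κ (C.nbr_z1 hx ht))))
    case a1 =>
      refine absurd hd (C.not_deg3_of_two (p := C.κ.symm .a2) (q := C.κ.symm .a0) ?_)
      intro t ht
      rcases C.nbr_a1 hx ht with h | h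
      · exact Or.inl (C.eq_symm_of_κ h)
      · exact Or.inr (C.eq_symm_of_κ h)
    all_goals simp
  · rintro ⟨h1, h2, h3⟩
    exact C.three_nbrs h1 h2 h3

lemma charD2N (x : W) : ShasD2 C.H x ↔ (C.κ x = .a2 ∨ C.κ x = .a0) := by
  constructor
  · rintro ⟨a, hxa, hd2⟩
    have ha : C.κ a = .a1 := (C.charDeg2 a).mp hd2
    rw [C.hadj] at hxa
    obtain ⟨_, hAT⟩ := hxa
    rw [ha] at hAT
    cases hx : C.κ x <;> rw [hx] at hAT
    all_goals first | exact Or.inl rfl | exact Or.inr rfl | exact hAT.elim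
  · intro hx
    refine ⟨C.κ.symm .a1, ?_, (C.charDeg2 _).mpr (by simp)⟩
    rcases hx with hx | hx <;>
      exact (C.adj_symm_right x .a1).mpr ⟨by simp [hx], by rw [hx]; trivial⟩

lemma charD1N (x : W) : ShasD1 C.H x ↔ (C.κ x = .a1 ∨ C.κ x = .z0) := by
  constructor
  · rintro ⟨a, hxa, hd1⟩
    rcases (C.charDeg1 a).mp hd1 with ha | ha <;>
    · rw [C.hadj] at hxa
      obtain ⟨_, hAT⟩ := hxa
      rw [ha] at hAT
      cases hx : C.κ x <;> rw [hx] at hAT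
      all_goals first | exact Or.inl rfl | exact Or.inr rfl | exact hAT.elim
  · rintro (hx | hx)
    · exact ⟨C.κ.symm .a2,
        (C.adj_symm_right x .a2).mpr ⟨by simp [hx], by rw [hx]; trivial⟩,
        (C.charDeg1 _).mpr (by simp)⟩
    · exact ⟨C.κ.symm .z1,
        (C.adj_symm_right x .z1).mpr ⟨by simp [hx], by rw [hx]; trivial⟩,
        (C.charDeg1 _).mpr (by simp)⟩

lemma charNu (x : W) : Snu C.H x ↔ ∃ v, C.κ x = .vtx v := by
  constructor
  · rintro ⟨hd3, a, hxa, hD2⟩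
    obtain ⟨hna2, hna1, hnz1⟩ := (C.charDeg3 x).mp hd3
    rw [C.hadj] at hxa
    obtain ⟨_, hAT⟩ := hxa
    rcases (C.charD2N a).mp hD2 with ha | ha <;> rw [ha] at hAT <;>
      cases hx : C.κ x <;> rw [hx] at hAT
    all_goals first
      | exact ⟨_, rfl⟩
      | exact hAT.elim
      | exact absurd hx hna1
      | exact absurd hx hna2
      | exact absurd hx hnz1
  · rintro ⟨v, hx⟩
    refine ⟨C.three_nbrs (by simp [hx]) (by simp [hx]) (by simp [hx]),
      C.κ.symm .a0,
      (C.adj_symm_right x .a0).mpr ⟨by simp [hx], by rw [hx]; trivial⟩,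
      (C.charD2N _).mpr (by simp)⟩

lemma charCol2 (x : W) : Scol2 C.H x ↔ ∃ v, C.κ x = .mv v := by
  constructor
  · rintro ⟨⟨hd3, a, hxa, hD1⟩, hnD2⟩
    obtain ⟨hna2, hna1, hnz1⟩ := (C.charDeg3 x).mp hd3
    have hnx : ¬ (C.κ x = .a2 ∨ C.κ x = .a0) := fun h => hnD2 ((C.charD2N x).mpr h)
    rw [C.hadj] at hxa
    obtain ⟨_, hAT⟩ := hxa
    rcases (C.charD1N a).mp hD1 with ha | ha <;> rw [ha] at hAT <;>
      cases hx : C.κ x <;> rw [hx] at hAT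
    all_goals first
      | exact ⟨_, rfl⟩
      | exact hAT.elim
      | exact absurd hx hna1
      | exact absurd hx hna2
      | exact absurd hx hnz1
      | exact absurd (Or.inl hx) hnx
      | exact absurd (Or.inr hx) hnx
  · rintro ⟨v, hx⟩
    refine ⟨⟨C.three_nbrs (by simp [hx]) (by simp [hx]) (by simp [hx]),
      C.κ.symm .z0,
      (C.adj_symm_right x .z0).mpr ⟨by simp [hx], by rw [hx]; trivial⟩,
      (C.charD1N _).mpr (by simp)⟩, ?_⟩
    intro hD2
    rcases (C.charD2N x).mp hD2 with h | h <;> rw [hx] at h <;> exact absurd h (by simp)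

lemma charCol1 (x : W) : Scol1 C.H x ↔ ∃ q, C.κ x = .mid q := by
  constructor
  · rintro ⟨⟨⟨⟨hd3, hnnu⟩, hnc2⟩, hnD1⟩, hnD2⟩
    obtain ⟨hna2, hna1, hnz1⟩ := (C.charDeg3 x).mp hd3
    cases hx : C.κ x
    case mid q => exact ⟨q, rfl⟩
    case a2 => exact absurd hx hna2
    case a1 => exact absurd hx hna1
    case z1 => exact absurd hx hnz1
    case a0 => exact absurd ((C.charD2N x).mpr (Or.inr hx)) hnD2
    case z0 => exact absurd ((C.charD1N x).mpr (Or.inr hx)) hnD1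
    case vtx v => exact absurd ((C.charNu x).mpr ⟨v, hx⟩) hnnu
    case mv v => exact absurd ((C.charCol2 x).mpr ⟨v, hx⟩) hnc2
  · rintro ⟨q, hx⟩
    refine ⟨⟨⟨⟨C.three_nbrs (by simp [hx]) (by simp [hx]) (by simp [hx]), ?_⟩, ?_⟩, ?_⟩, ?_⟩
    · intro h; obtain ⟨v, hv⟩ := (C.charNu x).mp h; rw [hx] at hv; exact absurd hv (by simp)
    · intro h; obtain ⟨v, hv⟩ := (C.charCol2 x).mp h; rw [hx] at hv; exact absurd hv (by simp)
    · intro h; rcases (C.charD1N x).mp h with h | h <;> rw [hx] at h <;> exact absurd h (by simp)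
    · intro h; rcases (C.charD2N x).mp h with h | h <;> rw [hx] at h <;> exact absurd h (by simp)

/-! ### order characterizations -/

lemma charNleqV (a b : V) :
    Snleq C.H (C.κ.symm (.vtx a)) (C.κ.symm (.vtx b)) ↔ C.oV a ≤ C.oV b := by
  constructor
  · intro h
    have he : C.H.Adj (C.κ.symm (.mid (.inl a))) (C.κ.symm (.vtx a)) :=
      C.adjS _ _ (by simp) (le_refl (C.oV a))
    have h2 := h _ (C.symm_ne (by simp)) (C.symm_ne (by simp)) he
    exact ((C.adj_symm_symm _ _).mp h2).2
  · intro hle e hne1 hne2 hA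
    rw [C.hadj] at hA
    simp only [Equiv.apply_symm_apply] at hA
    obtain ⟨_, hAT⟩ := hA
    rw [C.hadj]
    simp only [Equiv.apply_symm_apply]
    have hken := C.κ_ne_of_ne hne2
    cases he : C.κ e <;> rw [he] at hAT
    case a0 => exact ⟨by simp, trivial⟩
    case vtx c => exact ⟨fun hh => hken (he.trans hh), trivial⟩
    case mid q => exact ⟨by simp, le_trans hAT hle⟩
    all_goals exact hAT.elim

lemma charNleqM (a b : V) :
    Snleq C.H (C.κ.symm (.mv a)) (C.κ.symm (.mv b)) ↔ C.oV b ≤ C.oV a := by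
  constructor
  · intro h
    have he : C.H.Adj (C.κ.symm (.mid (.inl a))) (C.κ.symm (.mv a)) :=
      C.adjS _ _ (by simp) (le_refl (C.oV a))
    have h2 := h _ (C.symm_ne (by simp)) (C.symm_ne (by simp)) he
    exact ((C.adj_symm_symm _ _).mp h2).2
  · intro hle e hne1 hne2 hA
    rw [C.hadj] at hA
    simp only [Equiv.apply_symm_apply] at hA
    obtain ⟨_, hAT⟩ := hA
    rw [C.hadj]
    simp only [Equiv.apply_symm_apply]
    have hken := C.κ_ne_of_ne hne2
    cases he : C.κ e <;> rw [he] at hAT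
    case z0 => exact ⟨by simp, trivial⟩
    case mv c => exact ⟨fun hh => hken (he.trans hh), trivial⟩
    case mid q => exact ⟨by simp, le_trans hle hAT⟩
    all_goals exact hAT.elim

lemma adj_mid_vtx {e x : W} {q : V ⊕ E} {b : V} (he : C.κ e = .mid q)
    (hx : C.κ x = .vtx b) : C.H.Adj e x ↔ C.iI q ≤ C.oV b := by
  rw [C.hadj, he, hx]
  simp only [ne_eq, reduceCtorEq, not_false_eq_true, true_and]
  exact Iff.rfl

lemma adj_mid_mv {e x : W} {q : V ⊕ E} {b : V} (he : C.κ e = .mid q)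
    (hx : C.κ x = .mv b) : C.H.Adj e x ↔ C.oV b ≤ C.jI q := by
  rw [C.hadj, he, hx]
  simp only [ne_eq, reduceCtorEq, not_false_eq_true, true_and]
  exact Iff.rfl

lemma charMinV {e x : W} {q : V ⊕ E} (he : C.κ e = .mid q) :
    SminV C.H x e ↔ x = C.κ.symm (.vtx (C.oV.symm (C.iI q))) := by
  constructor
  · rintro ⟨⟨hnu, hex⟩, hall⟩
    obtain ⟨b, hx⟩ := (C.charNu x).mp hnu
    have hib : C.iI q ≤ C.oV b := (C.adj_mid_vtx he hx).mp hex
    have hv' : Snu C.H (C.κ.symm (.vtx (C.oV.symm (C.iI q)))) :=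
      (C.charNu _).mpr ⟨C.oV.symm (C.iI q), by simp⟩
    have hev' : C.H.Adj e (C.κ.symm (.vtx (C.oV.symm (C.iI q)))) := by
      rw [C.adj_mid_vtx (b := C.oV.symm (C.iI q)) he (by simp)]
      simp
    have hle := hall _ hv' hev'
    rw [C.eq_symm_of_κ hx] at hle
    have := (C.charNleqV b (C.oV.symm (C.iI q))).mp hle
    simp only [Equiv.apply_symm_apply] at this
    have hb : C.oV b = C.iI q := le_antisymm this hib
    rw [C.eq_symm_of_κ hx, ← hb]
    simp
  · rintro rfl
    refine ⟨⟨(C.charNu _).mpr ⟨C.oV.symm (C.iI q), by simp⟩, ?_⟩, ?_⟩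
    · rw [C.adj_mid_vtx (b := C.oV.symm (C.iI q)) he (by simp)]; simp
    · intro v' hnu' hev'
      obtain ⟨c, hc⟩ := (C.charNu v').mp hnu'
      have hic : C.iI q ≤ C.oV c := (C.adj_mid_vtx he hc).mp hev'
      rw [C.eq_symm_of_κ hc, C.charNleqV]
      simpa using hic

lemma charMaxM {e m : W} {q : V ⊕ E} (he : C.κ e = .mid q) :
    SmaxM C.H m e ↔ m = C.κ.symm (.mv (C.oV.symm (C.jI q))) := by
  constructor
  · rintro ⟨⟨hc2, hem⟩, hall⟩
    obtain ⟨b, hm⟩ := (C.charCol2 m).mp hc2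
    have hib : C.oV b ≤ C.jI q := (C.adj_mid_mv he hm).mp hem
    have hm' : Scol2 C.H (C.κ.symm (.mv (C.oV.symm (C.jI q)))) :=
      (C.charCol2 _).mpr ⟨C.oV.symm (C.jI q), by simp⟩
    have hem' : C.H.Adj e (C.κ.symm (.mv (C.oV.symm (C.jI q)))) := by
      rw [C.adj_mid_mv (b := C.oV.symm (C.jI q)) he (by simp)]
      simp
    have hle := hall _ hm' hem'
    rw [C.eq_symm_of_κ hm] at hle
    have := (C.charNleqM b (C.oV.symm (C.jI q))).mp hle
    simp only [Equiv.apply_symm_apply] at this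
    have hb : C.oV b = C.jI q := le_antisymm hib this
    rw [C.eq_symm_of_κ hm, ← hb]
    simp
  · rintro rfl
    refine ⟨⟨(C.charCol2 _).mpr ⟨C.oV.symm (C.jI q), by simp⟩, ?_⟩, ?_⟩
    · rw [C.adj_mid_mv (b := C.oV.symm (C.jI q)) he (by simp)]; simp
    · intro m' hc2' hem'
      obtain ⟨c, hc⟩ := (C.charCol2 m').mp hc2'
      have hic : C.oV c ≤ C.jI q := (C.adj_mid_mv he hc).mp hem'
      rw [C.eq_symm_of_κ hc, C.charNleqM]
      simpa using hic

lemma charSameV {e e' : W} {q q' : V ⊕ E} (he : C.κ e = .mid q)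
    (he' : C.κ e' = .mid q') : SsameV C.H e e' ↔ C.iI q = C.iI q' := by
  constructor
  · intro h
    have h1 := (h (C.κ.symm (.vtx (C.oV.symm (C.iI q))))
      ((C.charNu _).mpr ⟨C.oV.symm (C.iI q), by simp⟩)).mp
    have h2 := (h (C.κ.symm (.vtx (C.oV.symm (C.iI q'))))
      ((C.charNu _).mpr ⟨C.oV.symm (C.iI q'), by simp⟩)).mpr
    rw [C.adj_mid_vtx (b := C.oV.symm (C.iI q)) he (by simp),
      C.adj_mid_vtx (b := C.oV.symm (C.iI q)) he' (by simp)] at h1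
    rw [C.adj_mid_vtx (b := C.oV.symm (C.iI q')) he (by simp),
      C.adj_mid_vtx (b := C.oV.symm (C.iI q')) he' (by simp)] at h2
    simp only [Equiv.apply_symm_apply] at h1 h2
    exact le_antisymm (h2 (le_refl _)) (h1 (le_refl _))
  · intro hiq v hnu
    obtain ⟨c, hc⟩ := (C.charNu v).mp hnu
    rw [C.adj_mid_vtx he hc, C.adj_mid_vtx he' hc, hiq]

lemma charIsP {e : W} {q : V ⊕ E} (he : C.κ e = .mid q) :
    SisP C.H e ↔ ∃ v, q = .inl v := by
  constructor
  · intro h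
    rcases q with v | s
    · exact ⟨v, rfl⟩
    exfalso
    have hcol1 : Scol1 C.H (C.κ.symm (.mid (.inl (C.oV.symm (C.eI s))))) :=
      (C.charCol1 _).mpr ⟨Sum.inl (C.oV.symm (C.eI s)), by simp⟩
    have hsame : SsameV C.H e (C.κ.symm (.mid (.inl (C.oV.symm (C.eI s))))) := by
      rw [C.charSameV (q' := Sum.inl (C.oV.symm (C.eI s))) he (by simp)]
      simp [iI]
    have hcol2 : Scol2 C.H (C.κ.symm (.mv (C.oV.symm (C.fI s)))) :=
      (C.charCol2 _).mpr ⟨C.oV.symm (C.fI s), by simp⟩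
    have hadj1 : C.H.Adj e (C.κ.symm (.mv (C.oV.symm (C.fI s)))) := by
      rw [C.adj_mid_mv (b := C.oV.symm (C.fI s)) he (by simp)]
      simp [jI]
    have := h _ hcol1 hsame _ hcol2 hadj1
    rw [C.adj_mid_mv (q := Sum.inl (C.oV.symm (C.eI s)))
      (b := C.oV.symm (C.fI s)) (by simp) (by simp)] at this
    have hle : C.fI s ≤ C.eI s := by simpa [jI] using this
    exact absurd hle (not_le.mpr (C.hef s))
  · rintro ⟨v, rfl⟩
    intro e' hc1 hsame m hc2 hadj1
    obtain ⟨q', he'⟩ := (C.charCol1 e').mp hc1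
    obtain ⟨c, hm⟩ := (C.charCol2 m).mp hc2
    rw [C.adj_mid_mv he' hm]
    have hiq : C.iI (Sum.inl v) = C.iI q' := (C.charSameV he he').mp hsame
    have h1 : C.oV c ≤ C.jI (Sum.inl v) := (C.adj_mid_mv he hm).mp hadj1
    have h2 : C.jI (Sum.inl v) = C.iI q' := by
      rw [← hiq]; rfl
    calc C.oV c ≤ C.iI q' := h2 ▸ h1
      _ ≤ C.jI q' := C.hij q'

lemma charMatch (x m : W) :
    Smatch C.H x m ↔ ∃ w, x = C.κ.symm (.vtx w) ∧ m = C.κ.symm (.mv w) := by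
  constructor
  · rintro ⟨p, ⟨⟨hc1, hisp⟩, hmin⟩, hmax⟩
    obtain ⟨q, hp⟩ := (C.charCol1 p).mp hc1
    obtain ⟨w, rfl⟩ := (C.charIsP hp).mp hisp
    refine ⟨w, ?_, ?_⟩
    · have := (C.charMinV hp).mp hmin
      simpa [iI] using this
    · have := (C.charMaxM hp).mp hmax
      simpa [jI] using this
  · rintro ⟨w, rfl, rfl⟩
    refine ⟨C.κ.symm (.mid (.inl w)), ⟨⟨(C.charCol1 _).mpr ⟨Sum.inl w, by simp⟩,
      (C.charIsP (q := Sum.inl w) (by simp)).mpr ⟨w, rfl⟩⟩, ?_⟩, ?_⟩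
    · rw [C.charMinV (q := Sum.inl w) (by simp)]
      simp [iI]
    · rw [C.charMaxM (q := Sum.inl w) (by simp)]
      simp [jI]

lemma charHalf (x y : W) :
    Shalf C.H x y ↔ ∃ s : E, x = C.κ.symm (.vtx (C.oV.symm (C.eI s))) ∧
      y = C.κ.symm (.vtx (C.oV.symm (C.fI s))) := by
  constructor
  · rintro ⟨e, ⟨⟨hc1, hnp⟩, hmin⟩, m, hmax, hmatch⟩
    obtain ⟨q, he⟩ := (C.charCol1 e).mp hc1
    rcases q with v | s
    · exact absurd ((C.charIsP he).mpr ⟨v, rfl⟩) hnp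
    refine ⟨s, ?_, ?_⟩
    · have := (C.charMinV he).mp hmin
      simpa [iI] using this
    · have hm := (C.charMaxM he).mp hmax
      obtain ⟨w, hy, hmw⟩ := (C.charMatch y m).mp hmatch
      rw [hm] at hmw
      have : w = C.oV.symm (C.fI s) := by
        have := C.κ.symm.injective hmw.symm
        simpa [jI] using this
      rw [hy, this]
  · rintro ⟨s, rfl, rfl⟩
    refine ⟨C.κ.symm (.mid (.inr s)), ⟨⟨(C.charCol1 _).mpr ⟨Sum.inr s, by simp⟩, ?_⟩, ?_⟩,
      C.κ.symm (.mv (C.oV.symm (C.fI s))), ?_, ?_⟩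
    · rw [C.charIsP (q := Sum.inr s) (by simp)]
      simp
    · rw [C.charMinV (q := Sum.inr s) (by simp)]
      simp [iI]
    · rw [C.charMaxM (q := Sum.inr s) (by simp)]
      simp [jI]
    · rw [C.charMatch]
      exact ⟨_, rfl, rfl⟩

end Ctx

set_option maxHeartbeats 2000000 in
theorem buildRep {V E : Type} {n : ℕ} (oV : V → Fin n) (eI fI : E → Fin n)
    (hIJf : ∀ s, eI s ≤ fI s)
    (L : Set ℝ) (α β : ℝ) (hα : 0 ≤ α) (hαβ : α < β)
    (hdense : ∀ lo hi : ℝ, α ≤ lo → lo < hi → hi ≤ β → ∃ l, l ∈ L ∧ lo < l ∧ l < hi) :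
    ∃ ℓT rT : TK V E → ℝ,
      (∀ t, ℓT t < rT t) ∧ (∀ t, rT t - ℓT t ∈ L) ∧
      (∀ s t, s ≠ t →
        ((max (ℓT s) (ℓT t) < min (rT s) (rT t)) ↔ AdjT oV eI fI s t)) := by
  obtain ⟨u, d, hu_def, hd_def⟩ : ∃ u d : ℝ, u = (β - α) / (16*(n:ℝ) + 20) ∧ d = (α + β) / 2 :=
    ⟨_, _, rfl, rfl⟩
  have hden : (0:ℝ) < 16*(n:ℝ) + 20 := by positivity
  have hu : 0 < u := by
    rw [hu_def]
    exact div_pos (by linarith) hden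
  have hkey : d = α + (8*(n:ℝ) + 10)*u := by
    rw [hu_def, hd_def]
    field_simp
    ring
  have hβd : β = d + (8*(n:ℝ) + 10)*u := by
    rw [hu_def, hd_def]
    field_simp
    ring
  have hnu : (0:ℝ) ≤ (n:ℝ)*u := by positivity
  have hdB : (8*(n:ℝ) + 10)*u ≤ d := by rw [hkey]; linarith
  have hd0 : 0 < d := by nlinarith
  have hαd : α ≤ d := by rw [hkey]; nlinarith
  -- index bounds, multiplied by u
  have castlt : ∀ k : Fin n, ((k:ℕ):ℝ) + 1 ≤ (n:ℝ) := by
    intro k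
    exact_mod_cast Nat.succ_le_of_lt k.isLt
  have mK : ∀ v : V, 0 ≤ ((oV v : ℕ):ℝ) * u ∧ ((oV v : ℕ):ℝ)*u ≤ (n:ℝ)*u - u := by
    intro v
    refine ⟨mul_nonneg (by positivity) hu.le, ?_⟩
    have h1 := castlt (oV v)
    have := mul_le_mul_of_nonneg_right (show ((oV v : ℕ):ℝ) ≤ (n:ℝ) - 1 by linarith) hu.le
    linarith [this]
  have mI : ∀ q : V ⊕ E, 0 ≤ idxR oV eI q * u ∧ idxR oV eI q * u ≤ (n:ℝ)*u - u := by
    intro q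
    refine ⟨mul_nonneg (by rw [idxR]; exact Nat.cast_nonneg _) hu.le, ?_⟩
    have h1 := castlt (Sum.elim oV eI q)
    have := mul_le_mul_of_nonneg_right
      (show idxR oV eI q ≤ (n:ℝ) - 1 by rw [idxR]; linarith) hu.le
    linarith [this]
  have mJ : ∀ q : V ⊕ E, 0 ≤ idxR oV fI q * u ∧ idxR oV fI q * u ≤ (n:ℝ)*u - u := by
    intro q
    refine ⟨mul_nonneg (by rw [idxR]; exact Nat.cast_nonneg _) hu.le, ?_⟩
    have h1 := castlt (Sum.elim oV fI q)
    have := mul_le_mul_of_nonneg_right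
      (show idxR oV fI q ≤ (n:ℝ) - 1 by rw [idxR]; linarith) hu.le
    linarith [this]
  have mIJ : ∀ q : V ⊕ E, idxR oV eI q * u ≤ idxR oV fI q * u := by
    intro q
    refine mul_le_mul_of_nonneg_right ?_ hu.le
    rcases q with v | s
    · exact le_refl _
    · simp only [idxR, Sum.elim_inr]
      exact_mod_cast hIJf s
  -- length windows are valid
  have hwin : ∀ t : TK V E, α ≤ wlo oV eI fI d u t ∧ wlo oV eI fI d u t < whi oV eI fI d u t ∧
      whi oV eI fI d u t ≤ β := by
    intro t
    rw [hβd]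
    cases t with
    | a2 => refine ⟨by simp only [wlo]; linarith, by simp only [wlo, whi]; linarith,
        by simp only [whi]; linarith⟩
    | a1 => refine ⟨by simp only [wlo]; linarith, by simp only [wlo, whi]; linarith,
        by simp only [whi]; linarith⟩
    | a0 => refine ⟨by simp only [wlo]; linarith, by simp only [wlo, whi]; linarith,
        by simp only [whi]; linarith⟩
    | z0 => refine ⟨by simp only [wlo]; linarith, by simp only [wlo, whi]; linarith,
        by simp only [whi]; linarith⟩
    | z1 => refine ⟨by simp only [wlo]; linarith, by simp only [wlo, whi]; linarith,
        by simp only [whi]; linarith⟩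
    | vtx v => refine ⟨by simp only [wlo]; linarith [(mK v).1],
        by simp only [wlo, whi]; linarith, by simp only [whi]; linarith [(mK v).2]⟩
    | mid q => refine ⟨by simp only [wlo]; linarith [mIJ q, (mI q).1],
        by simp only [wlo, whi]; linarith,
        by simp only [whi]; linarith [(mJ q).2, (mI q).1]⟩
    | mv v => refine ⟨by simp only [wlo]; linarith, by simp only [wlo, whi]; linarith,
        by simp only [whi]; linarith⟩
  have hch := fun t : TK V E =>
    hdense (wlo oV eI fI d u t) (whi oV eI fI d u t) (hwin t).1 (hwin t).2.1 (hwin t).2.2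
  choose len hlenL hlen1 hlen2 using hch
  -- expanded length window facts
  have LA2 : d < len TK.a2 ∧ len TK.a2 < d + u :=
    ⟨by simpa [wlo] using hlen1 TK.a2, by simpa [whi] using hlen2 TK.a2⟩
  have LA1 : d < len TK.a1 ∧ len TK.a1 < d + u :=
    ⟨by simpa [wlo] using hlen1 TK.a1, by simpa [whi] using hlen2 TK.a1⟩
  have LA0 : d + u < len TK.a0 ∧ len TK.a0 < d + 2*u :=
    ⟨by simpa [wlo] using hlen1 TK.a0, by simpa [whi] using hlen2 TK.a0⟩
  have LZ0 : d + (4*(n:ℝ)+4)*u < len TK.z0 ∧ len TK.z0 < d + (4*(n:ℝ)+5)*u :=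
    ⟨by simpa [wlo] using hlen1 TK.z0, by simpa [whi] using hlen2 TK.z0⟩
  have LZ1 : d < len TK.z1 ∧ len TK.z1 < d + u :=
    ⟨by simpa [wlo] using hlen1 TK.z1, by simpa [whi] using hlen2 TK.z1⟩
  have LV : ∀ v : V, d + (4*(((oV v : ℕ):ℝ))+4)*u < len (TK.vtx v) ∧
      len (TK.vtx v) < d + (4*(((oV v : ℕ):ℝ))+6)*u := fun v =>
    ⟨by simpa [wlo] using hlen1 (TK.vtx v), by simpa [whi] using hlen2 (TK.vtx v)⟩
  have LM : ∀ q : V ⊕ E, d + (4*(idxR oV fI q - idxR oV eI q)+2)*u < len (TK.mid q) ∧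
      len (TK.mid q) < d + (4*(idxR oV fI q - idxR oV eI q)+3)*u := fun q =>
    ⟨by simpa [wlo] using hlen1 (TK.mid q), by simpa [whi] using hlen2 (TK.mid q)⟩
  have LW : ∀ v : V, d < len (TK.mv v) ∧ len (TK.mv v) < d + u := fun v =>
    ⟨by simpa [wlo] using hlen1 (TK.mv v), by simpa [whi] using hlen2 (TK.mv v)⟩
  have hlenpos : ∀ t, 0 < len t := by
    intro t
    have h := hlen1 t
    have := (hwin t).1
    linarith [hαd, hα]
  have hfinle : ∀ a b : Fin n, (a ≤ b) ↔ (((a:ℕ):ℝ) ≤ ((b:ℕ):ℝ)) := by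
    intro a b
    rw [Fin.le_def]
    exact_mod_cast Iff.rfl
  refine ⟨lpos oV eI d u, fun t => lpos oV eI d u t + len t, ?_, ?_, ?_⟩
  · intro t
    show lpos oV eI d u t < lpos oV eI d u t + len t
    linarith [hlenpos t]
  · intro t
    show lpos oV eI d u t + len t - lpos oV eI d u t ∈ L
    simpa using hlenL t
  have hfinle2 : ∀ (q : V ⊕ E) (v : V),
      (Sum.elim oV eI q ≤ oV v) ↔ (idxR oV eI q ≤ ((oV v : ℕ):ℝ)) := by
    intro q v
    rw [idxR, Fin.le_def]
    exact_mod_cast Iff.rfl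
  have hfinle3 : ∀ (q : V ⊕ E) (v : V),
      (oV v ≤ Sum.elim oV fI q) ↔ (((oV v : ℕ):ℝ) ≤ idxR oV fI q) := by
    intro q v
    rw [idxR, Fin.le_def]
    exact_mod_cast Iff.rfl
  · intro s t hst
    rcases s with _ | _ | _ | _ | _ | v | q | v
    -- s = a2
    · rcases t with _ | _ | _ | _ | _ | v' | q' | v'
      · exact absurd rfl hst
      · simp only [lpos, AdjT, max_lt_iff, lt_min_iff, sup_lt_iff, lt_inf_iff, iff_true]
        refine ⟨⟨?_, ?_⟩, ?_, ?_⟩ <;> linarith [LA2.1, LA2.2, LA1.1, LA1.2, hu, hd0, hnu, hdB]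
      · simp only [lpos, AdjT, max_lt_iff, lt_min_iff, sup_lt_iff, lt_inf_iff, iff_false]
        rintro ⟨⟨h11, h12⟩, h21, h22⟩
        linarith [LA2.1, LA2.2, LA0.1, LA0.2, hu, hd0, hnu, hdB]
      · simp only [lpos, AdjT, max_lt_iff, lt_min_iff, sup_lt_iff, lt_inf_iff, iff_false]
        rintro ⟨⟨h11, h12⟩, h21, h22⟩
        linarith [LA2.1, LA2.2, LZ0.1, LZ0.2, hu, hd0, hnu, hdB]
      · simp only [lpos, AdjT, max_lt_iff, lt_min_iff, sup_lt_iff, lt_inf_iff, iff_false]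
        rintro ⟨⟨h11, h12⟩, h21, h22⟩
        linarith [LA2.1, LA2.2, LZ1.1, LZ1.2, hu, hd0, hnu, hdB]
      · simp only [lpos, AdjT, max_lt_iff, lt_min_iff, sup_lt_iff, lt_inf_iff, iff_false]
        rintro ⟨⟨h11, h12⟩, h21, h22⟩
        linarith [LA2.1, LA2.2, (LV v').1, (LV v').2, (mK v').1, (mK v').2, hu, hd0, hnu, hdB]
      · simp only [lpos, AdjT, max_lt_iff, lt_min_iff, sup_lt_iff, lt_inf_iff, iff_false]
        rintro ⟨⟨h11, h12⟩, h21, h22⟩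
        linarith [LA2.1, LA2.2, (LM q').1, (LM q').2, (mI q').1, (mI q').2, (mJ q').1, (mJ q').2, mIJ q', hu, hd0, hnu, hdB]
      · simp only [lpos, AdjT, max_lt_iff, lt_min_iff, sup_lt_iff, lt_inf_iff, iff_false]
        rintro ⟨⟨h11, h12⟩, h21, h22⟩
        linarith [LA2.1, LA2.2, (LW v').1, (LW v').2, (mK v').1, (mK v').2, hu, hd0, hnu, hdB]
    -- s = a1
    · rcases t with _ | _ | _ | _ | _ | v' | q' | v'
      · simp only [lpos, AdjT, max_lt_iff, lt_min_iff, sup_lt_iff, lt_inf_iff, iff_true]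
        refine ⟨⟨?_, ?_⟩, ?_, ?_⟩ <;> linarith [LA1.1, LA1.2, LA2.1, LA2.2, hu, hd0, hnu, hdB]
      · exact absurd rfl hst
      · simp only [lpos, AdjT, max_lt_iff, lt_min_iff, sup_lt_iff, lt_inf_iff, iff_true]
        refine ⟨⟨?_, ?_⟩, ?_, ?_⟩ <;> linarith [LA1.1, LA1.2, LA0.1, LA0.2, hu, hd0, hnu, hdB]
      · simp only [lpos, AdjT, max_lt_iff, lt_min_iff, sup_lt_iff, lt_inf_iff, iff_false]
        rintro ⟨⟨h11, h12⟩, h21, h22⟩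
        linarith [LA1.1, LA1.2, LZ0.1, LZ0.2, hu, hd0, hnu, hdB]
      · simp only [lpos, AdjT, max_lt_iff, lt_min_iff, sup_lt_iff, lt_inf_iff, iff_false]
        rintro ⟨⟨h11, h12⟩, h21, h22⟩
        linarith [LA1.1, LA1.2, LZ1.1, LZ1.2, hu, hd0, hnu, hdB]
      · simp only [lpos, AdjT, max_lt_iff, lt_min_iff, sup_lt_iff, lt_inf_iff, iff_false]
        rintro ⟨⟨h11, h12⟩, h21, h22⟩
        linarith [LA1.1, LA1.2, (LV v').1, (LV v').2, (mK v').1, (mK v').2, hu, hd0, hnu, hdB]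
      · simp only [lpos, AdjT, max_lt_iff, lt_min_iff, sup_lt_iff, lt_inf_iff, iff_false]
        rintro ⟨⟨h11, h12⟩, h21, h22⟩
        linarith [LA1.1, LA1.2, (LM q').1, (LM q').2, (mI q').1, (mI q').2, (mJ q').1, (mJ q').2, mIJ q', hu, hd0, hnu, hdB]
      · simp only [lpos, AdjT, max_lt_iff, lt_min_iff, sup_lt_iff, lt_inf_iff, iff_false]
        rintro ⟨⟨h11, h12⟩, h21, h22⟩
        linarith [LA1.1, LA1.2, (LW v').1, (LW v').2, (mK v').1, (mK v').2, hu, hd0, hnu, hdB]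
    -- s = a0
    · rcases t with _ | _ | _ | _ | _ | v' | q' | v'
      · simp only [lpos, AdjT, max_lt_iff, lt_min_iff, sup_lt_iff, lt_inf_iff, iff_false]
        rintro ⟨⟨h11, h12⟩, h21, h22⟩
        linarith [LA0.1, LA0.2, LA2.1, LA2.2, hu, hd0, hnu, hdB]
      · simp only [lpos, AdjT, max_lt_iff, lt_min_iff, sup_lt_iff, lt_inf_iff, iff_true]
        refine ⟨⟨?_, ?_⟩, ?_, ?_⟩ <;> linarith [LA0.1, LA0.2, LA1.1, LA1.2, hu, hd0, hnu, hdB]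
      · exact absurd rfl hst
      · simp only [lpos, AdjT, max_lt_iff, lt_min_iff, sup_lt_iff, lt_inf_iff, iff_false]
        rintro ⟨⟨h11, h12⟩, h21, h22⟩
        linarith [LA0.1, LA0.2, LZ0.1, LZ0.2, hu, hd0, hnu, hdB]
      · simp only [lpos, AdjT, max_lt_iff, lt_min_iff, sup_lt_iff, lt_inf_iff, iff_false]
        rintro ⟨⟨h11, h12⟩, h21, h22⟩
        linarith [LA0.1, LA0.2, LZ1.1, LZ1.2, hu, hd0, hnu, hdB]
      · simp only [lpos, AdjT, max_lt_iff, lt_min_iff, sup_lt_iff, lt_inf_iff, iff_true]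
        refine ⟨⟨?_, ?_⟩, ?_, ?_⟩ <;> linarith [LA0.1, LA0.2, (LV v').1, (LV v').2, (mK v').1, (mK v').2, hu, hd0, hnu, hdB]
      · simp only [lpos, AdjT, max_lt_iff, lt_min_iff, sup_lt_iff, lt_inf_iff, iff_false]
        rintro ⟨⟨h11, h12⟩, h21, h22⟩
        linarith [LA0.1, LA0.2, (LM q').1, (LM q').2, (mI q').1, (mI q').2, (mJ q').1, (mJ q').2, mIJ q', hu, hd0, hnu, hdB]
      · simp only [lpos, AdjT, max_lt_iff, lt_min_iff, sup_lt_iff, lt_inf_iff, iff_false]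
        rintro ⟨⟨h11, h12⟩, h21, h22⟩
        linarith [LA0.1, LA0.2, (LW v').1, (LW v').2, (mK v').1, (mK v').2, hu, hd0, hnu, hdB]
    -- s = z0
    · rcases t with _ | _ | _ | _ | _ | v' | q' | v'
      · simp only [lpos, AdjT, max_lt_iff, lt_min_iff, sup_lt_iff, lt_inf_iff, iff_false]
        rintro ⟨⟨h11, h12⟩, h21, h22⟩
        linarith [LZ0.1, LZ0.2, LA2.1, LA2.2, hu, hd0, hnu, hdB]
      · simp only [lpos, AdjT, max_lt_iff, lt_min_iff, sup_lt_iff, lt_inf_iff, iff_false]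
        rintro ⟨⟨h11, h12⟩, h21, h22⟩
        linarith [LZ0.1, LZ0.2, LA1.1, LA1.2, hu, hd0, hnu, hdB]
      · simp only [lpos, AdjT, max_lt_iff, lt_min_iff, sup_lt_iff, lt_inf_iff, iff_false]
        rintro ⟨⟨h11, h12⟩, h21, h22⟩
        linarith [LZ0.1, LZ0.2, LA0.1, LA0.2, hu, hd0, hnu, hdB]
      · exact absurd rfl hst
      · simp only [lpos, AdjT, max_lt_iff, lt_min_iff, sup_lt_iff, lt_inf_iff, iff_true]
        refine ⟨⟨?_, ?_⟩, ?_, ?_⟩ <;> linarith [LZ0.1, LZ0.2, LZ1.1, LZ1.2, hu, hd0, hnu, hdB]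
      · simp only [lpos, AdjT, max_lt_iff, lt_min_iff, sup_lt_iff, lt_inf_iff, iff_false]
        rintro ⟨⟨h11, h12⟩, h21, h22⟩
        linarith [LZ0.1, LZ0.2, (LV v').1, (LV v').2, (mK v').1, (mK v').2, hu, hd0, hnu, hdB]
      · simp only [lpos, AdjT, max_lt_iff, lt_min_iff, sup_lt_iff, lt_inf_iff, iff_false]
        rintro ⟨⟨h11, h12⟩, h21, h22⟩
        linarith [LZ0.1, LZ0.2, (LM q').1, (LM q').2, (mI q').1, (mI q').2, (mJ q').1, (mJ q').2, mIJ q', hu, hd0, hnu, hdB]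
      · simp only [lpos, AdjT, max_lt_iff, lt_min_iff, sup_lt_iff, lt_inf_iff, iff_true]
        refine ⟨⟨?_, ?_⟩, ?_, ?_⟩ <;> linarith [LZ0.1, LZ0.2, (LW v').1, (LW v').2, (mK v').1, (mK v').2, hu, hd0, hnu, hdB]
    -- s = z1
    · rcases t with _ | _ | _ | _ | _ | v' | q' | v'
      · simp only [lpos, AdjT, max_lt_iff, lt_min_iff, sup_lt_iff, lt_inf_iff, iff_false]
        rintro ⟨⟨h11, h12⟩, h21, h22⟩
        linarith [LZ1.1, LZ1.2, LA2.1, LA2.2, hu, hd0, hnu, hdB]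
      · simp only [lpos, AdjT, max_lt_iff, lt_min_iff, sup_lt_iff, lt_inf_iff, iff_false]
        rintro ⟨⟨h11, h12⟩, h21, h22⟩
        linarith [LZ1.1, LZ1.2, LA1.1, LA1.2, hu, hd0, hnu, hdB]
      · simp only [lpos, AdjT, max_lt_iff, lt_min_iff, sup_lt_iff, lt_inf_iff, iff_false]
        rintro ⟨⟨h11, h12⟩, h21, h22⟩
        linarith [LZ1.1, LZ1.2, LA0.1, LA0.2, hu, hd0, hnu, hdB]
      · simp only [lpos, AdjT, max_lt_iff, lt_min_iff, sup_lt_iff, lt_inf_iff, iff_true]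
        refine ⟨⟨?_, ?_⟩, ?_, ?_⟩ <;> linarith [LZ1.1, LZ1.2, LZ0.1, LZ0.2, hu, hd0, hnu, hdB]
      · exact absurd rfl hst
      · simp only [lpos, AdjT, max_lt_iff, lt_min_iff, sup_lt_iff, lt_inf_iff, iff_false]
        rintro ⟨⟨h11, h12⟩, h21, h22⟩
        linarith [LZ1.1, LZ1.2, (LV v').1, (LV v').2, (mK v').1, (mK v').2, hu, hd0, hnu, hdB]
      · simp only [lpos, AdjT, max_lt_iff, lt_min_iff, sup_lt_iff, lt_inf_iff, iff_false]
        rintro ⟨⟨h11, h12⟩, h21, h22⟩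
        linarith [LZ1.1, LZ1.2, (LM q').1, (LM q').2, (mI q').1, (mI q').2, (mJ q').1, (mJ q').2, mIJ q', hu, hd0, hnu, hdB]
      · simp only [lpos, AdjT, max_lt_iff, lt_min_iff, sup_lt_iff, lt_inf_iff, iff_false]
        rintro ⟨⟨h11, h12⟩, h21, h22⟩
        linarith [LZ1.1, LZ1.2, (LW v').1, (LW v').2, (mK v').1, (mK v').2, hu, hd0, hnu, hdB]
    -- s = vtx
    · rcases t with _ | _ | _ | _ | _ | v' | q' | v'
      · simp only [lpos, AdjT, max_lt_iff, lt_min_iff, sup_lt_iff, lt_inf_iff, iff_false]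
        rintro ⟨⟨h11, h12⟩, h21, h22⟩
        linarith [(LV v).1, (LV v).2, (mK v).1, (mK v).2, LA2.1, LA2.2, hu, hd0, hnu, hdB]
      · simp only [lpos, AdjT, max_lt_iff, lt_min_iff, sup_lt_iff, lt_inf_iff, iff_false]
        rintro ⟨⟨h11, h12⟩, h21, h22⟩
        linarith [(LV v).1, (LV v).2, (mK v).1, (mK v).2, LA1.1, LA1.2, hu, hd0, hnu, hdB]
      · simp only [lpos, AdjT, max_lt_iff, lt_min_iff, sup_lt_iff, lt_inf_iff, iff_true]
        refine ⟨⟨?_, ?_⟩, ?_, ?_⟩ <;> linarith [(LV v).1, (LV v).2, (mK v).1, (mK v).2, LA0.1, LA0.2, hu, hd0, hnu, hdB]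
      · simp only [lpos, AdjT, max_lt_iff, lt_min_iff, sup_lt_iff, lt_inf_iff, iff_false]
        rintro ⟨⟨h11, h12⟩, h21, h22⟩
        linarith [(LV v).1, (LV v).2, (mK v).1, (mK v).2, LZ0.1, LZ0.2, hu, hd0, hnu, hdB]
      · simp only [lpos, AdjT, max_lt_iff, lt_min_iff, sup_lt_iff, lt_inf_iff, iff_false]
        rintro ⟨⟨h11, h12⟩, h21, h22⟩
        linarith [(LV v).1, (LV v).2, (mK v).1, (mK v).2, LZ1.1, LZ1.2, hu, hd0, hnu, hdB]
      · simp only [lpos, AdjT, max_lt_iff, lt_min_iff, sup_lt_iff, lt_inf_iff, iff_true]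
        refine ⟨⟨?_, ?_⟩, ?_, ?_⟩ <;> linarith [(LV v).1, (LV v).2, (mK v).1, (mK v).2, (LV v').1, (LV v').2, (mK v').1, (mK v').2, hu, hd0, hnu, hdB]
      · simp only [lpos, AdjT, max_lt_iff, lt_min_iff, sup_lt_iff, lt_inf_iff]
        rw [hfinle2]
        constructor
        · rintro ⟨⟨h11, h12⟩, h21, h22⟩
          by_contra hc
          push_neg at hc
          have hnat : (oV v : ℕ) < ((Sum.elim oV eI q' : Fin n) : ℕ) := by
            rw [idxR] at hc
            exact_mod_cast hc
          have hc2 : ((oV v : ℕ):ℝ) + 1 ≤ idxR oV eI q' := by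
            rw [idxR]
            exact_mod_cast Nat.succ_le_of_lt hnat
          have hmm := mul_le_mul_of_nonneg_right hc2 hu.le
          linarith [(LV v).2, hmm, hu, h21]
        · intro hle
          have hmm := mul_le_mul_of_nonneg_right hle hu.le
          refine ⟨⟨?_, ?_⟩, ?_, ?_⟩ <;> linarith [(LV v).1, (LV v).2, (mK v).1, (mK v).2, (LM q').1, (LM q').2, (mI q').1, (mI q').2, (mJ q').1, (mJ q').2, mIJ q', hu, hd0, hnu, hdB, hmm]
      · simp only [lpos, AdjT, max_lt_iff, lt_min_iff, sup_lt_iff, lt_inf_iff, iff_false]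
        rintro ⟨⟨h11, h12⟩, h21, h22⟩
        linarith [(LV v).1, (LV v).2, (mK v).1, (mK v).2, (LW v').1, (LW v').2, (mK v').1, (mK v').2, hu, hd0, hnu, hdB]
    -- s = mid
    · rcases t with _ | _ | _ | _ | _ | v' | q' | v'
      · simp only [lpos, AdjT, max_lt_iff, lt_min_iff, sup_lt_iff, lt_inf_iff, iff_false]
        rintro ⟨⟨h11, h12⟩, h21, h22⟩
        linarith [(LM q).1, (LM q).2, (mI q).1, (mI q).2, (mJ q).1, (mJ q).2, mIJ q, LA2.1, LA2.2, hu, hd0, hnu, hdB]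
      · simp only [lpos, AdjT, max_lt_iff, lt_min_iff, sup_lt_iff, lt_inf_iff, iff_false]
        rintro ⟨⟨h11, h12⟩, h21, h22⟩
        linarith [(LM q).1, (LM q).2, (mI q).1, (mI q).2, (mJ q).1, (mJ q).2, mIJ q, LA1.1, LA1.2, hu, hd0, hnu, hdB]
      · simp only [lpos, AdjT, max_lt_iff, lt_min_iff, sup_lt_iff, lt_inf_iff, iff_false]
        rintro ⟨⟨h11, h12⟩, h21, h22⟩
        linarith [(LM q).1, (LM q).2, (mI q).1, (mI q).2, (mJ q).1, (mJ q).2, mIJ q, LA0.1, LA0.2, hu, hd0, hnu, hdB]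
      · simp only [lpos, AdjT, max_lt_iff, lt_min_iff, sup_lt_iff, lt_inf_iff, iff_false]
        rintro ⟨⟨h11, h12⟩, h21, h22⟩
        linarith [(LM q).1, (LM q).2, (mI q).1, (mI q).2, (mJ q).1, (mJ q).2, mIJ q, LZ0.1, LZ0.2, hu, hd0, hnu, hdB]
      · simp only [lpos, AdjT, max_lt_iff, lt_min_iff, sup_lt_iff, lt_inf_iff, iff_false]
        rintro ⟨⟨h11, h12⟩, h21, h22⟩
        linarith [(LM q).1, (LM q).2, (mI q).1, (mI q).2, (mJ q).1, (mJ q).2, mIJ q, LZ1.1, LZ1.2, hu, hd0, hnu, hdB]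
      · simp only [lpos, AdjT, max_lt_iff, lt_min_iff, sup_lt_iff, lt_inf_iff]
        rw [hfinle2]
        constructor
        · rintro ⟨⟨h11, h12⟩, h21, h22⟩
          by_contra hc
          push_neg at hc
          have hnat : (oV v' : ℕ) < ((Sum.elim oV eI q : Fin n) : ℕ) := by
            rw [idxR] at hc
            exact_mod_cast hc
          have hc2 : ((oV v' : ℕ):ℝ) + 1 ≤ idxR oV eI q := by
            rw [idxR]
            exact_mod_cast Nat.succ_le_of_lt hnat
          have hmm := mul_le_mul_of_nonneg_right hc2 hu.le
          linarith [(LV v').2, hmm, hu, h12]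
        · intro hle
          have hmm := mul_le_mul_of_nonneg_right hle hu.le
          refine ⟨⟨?_, ?_⟩, ?_, ?_⟩ <;> linarith [(LM q).1, (LM q).2, (mI q).1, (mI q).2, (mJ q).1, (mJ q).2, mIJ q, (LV v').1, (LV v').2, (mK v').1, (mK v').2, hu, hd0, hnu, hdB, hmm]
      · simp only [lpos, AdjT, max_lt_iff, lt_min_iff, sup_lt_iff, lt_inf_iff, iff_true]
        refine ⟨⟨?_, ?_⟩, ?_, ?_⟩ <;> linarith [(LM q).1, (LM q).2, (mI q).1, (mI q).2, (mJ q).1, (mJ q).2, mIJ q, (LM q').1, (LM q').2, (mI q').1, (mI q').2, (mJ q').1, (mJ q').2, mIJ q', hu, hd0, hnu, hdB]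
      · simp only [lpos, AdjT, max_lt_iff, lt_min_iff, sup_lt_iff, lt_inf_iff]
        rw [hfinle3]
        constructor
        · rintro ⟨⟨h11, h12⟩, h21, h22⟩
          by_contra hc
          push_neg at hc
          have hnat : ((Sum.elim oV fI q : Fin n) : ℕ) < (oV v' : ℕ) := by
            rw [idxR] at hc
            exact_mod_cast hc
          have hc2 : idxR oV fI q + 1 ≤ ((oV v' : ℕ):ℝ) := by
            rw [idxR]
            exact_mod_cast Nat.succ_le_of_lt hnat
          have hmm := mul_le_mul_of_nonneg_right hc2 hu.le
          linarith [(LM q).2, hmm, hu, h21]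
        · intro hle
          have hmm := mul_le_mul_of_nonneg_right hle hu.le
          refine ⟨⟨?_, ?_⟩, ?_, ?_⟩ <;> linarith [(LM q).1, (LM q).2, (mI q).1, (mI q).2, (mJ q).1, (mJ q).2, mIJ q, (LW v').1, (LW v').2, (mK v').1, (mK v').2, hu, hd0, hnu, hdB, hmm]
    -- s = mv
    · rcases t with _ | _ | _ | _ | _ | v' | q' | v'
      · simp only [lpos, AdjT, max_lt_iff, lt_min_iff, sup_lt_iff, lt_inf_iff, iff_false]
        rintro ⟨⟨h11, h12⟩, h21, h22⟩
        linarith [(LW v).1, (LW v).2, (mK v).1, (mK v).2, LA2.1, LA2.2, hu, hd0, hnu, hdB]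
      · simp only [lpos, AdjT, max_lt_iff, lt_min_iff, sup_lt_iff, lt_inf_iff, iff_false]
        rintro ⟨⟨h11, h12⟩, h21, h22⟩
        linarith [(LW v).1, (LW v).2, (mK v).1, (mK v).2, LA1.1, LA1.2, hu, hd0, hnu, hdB]
      · simp only [lpos, AdjT, max_lt_iff, lt_min_iff, sup_lt_iff, lt_inf_iff, iff_false]
        rintro ⟨⟨h11, h12⟩, h21, h22⟩
        linarith [(LW v).1, (LW v).2, (mK v).1, (mK v).2, LA0.1, LA0.2, hu, hd0, hnu, hdB]
      · simp only [lpos, AdjT, max_lt_iff, lt_min_iff, sup_lt_iff, lt_inf_iff, iff_true]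
        refine ⟨⟨?_, ?_⟩, ?_, ?_⟩ <;> linarith [(LW v).1, (LW v).2, (mK v).1, (mK v).2, LZ0.1, LZ0.2, hu, hd0, hnu, hdB]
      · simp only [lpos, AdjT, max_lt_iff, lt_min_iff, sup_lt_iff, lt_inf_iff, iff_false]
        rintro ⟨⟨h11, h12⟩, h21, h22⟩
        linarith [(LW v).1, (LW v).2, (mK v).1, (mK v).2, LZ1.1, LZ1.2, hu, hd0, hnu, hdB]
      · simp only [lpos, AdjT, max_lt_iff, lt_min_iff, sup_lt_iff, lt_inf_iff, iff_false]
        rintro ⟨⟨h11, h12⟩, h21, h22⟩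
        linarith [(LW v).1, (LW v).2, (mK v).1, (mK v).2, (LV v').1, (LV v').2, (mK v').1, (mK v').2, hu, hd0, hnu, hdB]
      · simp only [lpos, AdjT, max_lt_iff, lt_min_iff, sup_lt_iff, lt_inf_iff]
        rw [hfinle3]
        constructor
        · rintro ⟨⟨h11, h12⟩, h21, h22⟩
          by_contra hc
          push_neg at hc
          have hnat : ((Sum.elim oV fI q' : Fin n) : ℕ) < (oV v : ℕ) := by
            rw [idxR] at hc
            exact_mod_cast hc
          have hc2 : idxR oV fI q' + 1 ≤ ((oV v : ℕ):ℝ) := by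
            rw [idxR]
            exact_mod_cast Nat.succ_le_of_lt hnat
          have hmm := mul_le_mul_of_nonneg_right hc2 hu.le
          linarith [(LM q').2, hmm, hu, h12]
        · intro hle
          have hmm := mul_le_mul_of_nonneg_right hle hu.le
          refine ⟨⟨?_, ?_⟩, ?_, ?_⟩ <;> linarith [(LW v).1, (LW v).2, (mK v).1, (mK v).2, (LM q').1, (LM q').2, (mI q').1, (mI q').2, (mJ q').1, (mJ q').2, mIJ q', hu, hd0, hnu, hdB, hmm]
      · simp only [lpos, AdjT, max_lt_iff, lt_min_iff, sup_lt_iff, lt_inf_iff, iff_true]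
        refine ⟨⟨?_, ?_⟩, ?_, ?_⟩ <;> linarith [(LW v).1, (LW v).2, (mK v).1, (mK v).2, (LW v').1, (LW v').2, (mK v').1, (mK v').2, hu, hd0, hnu, hdB]


/-- enumeration of the kinds -/
def tkEquiv (V E : Type) :
    TK V E ≃ ((Unit ⊕ Unit ⊕ Unit ⊕ Unit ⊕ Unit) ⊕ (V ⊕ ((V ⊕ E) ⊕ V))) where
  toFun t := match t with
    | .a2 => .inl (.inl ())
    | .a1 => .inl (.inr (.inl ()))
    | .a0 => .inl (.inr (.inr (.inl ())))
    | .z0 => .inl (.inr (.inr (.inr (.inl ()))))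
    | .z1 => .inl (.inr (.inr (.inr (.inr ()))))
    | .vtx v => .inr (.inl v)
    | .mid q => .inr (.inr (.inl q))
    | .mv v => .inr (.inr (.inr v))
  invFun x := match x with
    | .inl (.inl ()) => .a2
    | .inl (.inr (.inl ())) => .a1
    | .inl (.inr (.inr (.inl ()))) => .a0
    | .inl (.inr (.inr (.inr (.inl ())))) => .z0
    | .inl (.inr (.inr (.inr (.inr ())))) => .z1
    | .inr (.inl v) => .vtx v
    | .inr (.inr (.inl q)) => .mid q
    | .inr (.inr (.inr v)) => .mv v
  left_inv t := by cases t <;> rfl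
  right_inv x := by
    rcases x with (⟨⟩ | ⟨⟩ | ⟨⟩ | ⟨⟩ | ⟨⟩) | (v | q | v) <;> rfl

lemma edge_rep {V : Type} (G : SimpleGraph V) (s : G.edgeSet) :
    ∃ a b : V, G.Adj a b ∧ s.1 = s(a, b) := by
  obtain ⟨z, hz⟩ := s
  induction z using Sym2.ind with
  | _ a b => exact ⟨a, b, G.mem_edgeSet.mp hz, rfl⟩

end IGP

theorem all_graphs_FO_interpretable_in_L_interval (L : Set ℝ)
    (hL0 : ∀ x ∈ L, (0 : ℝ) ≤ x)
    (hdense : ∃ U : Set ℝ, IsOpen U ∧ U.Nonempty ∧ U ⊆ closure L) :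
    ∃ (ν : Language.graph.Formula (Fin 1)) (μ : Language.graph.Formula (Fin 2)),
      (∀ (W : Type) (H : SimpleGraph W) (x y : W),
        gRealize2 H μ x y ↔ gRealize2 H μ y x) ∧
      ∀ (V : Type) [Fintype V] (G : SimpleGraph V), 2 ≤ Fintype.card V →
        ∃ (H : SimpleGraph (Fin (3 * Fintype.card V + 5 + G.edgeSet.ncard)))
          (ℓ r : Fin (3 * Fintype.card V + 5 + G.edgeSet.ncard) → ℝ),
          IsIntervalRep H ℓ r ∧ (∀ v, r v - ℓ v ∈ L) ∧
          Nonempty (G ≃g interpGraph H ν μ) := by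
  classical
  -- extract a closed interval of density
  obtain ⟨U, hUopen, ⟨x0, hx0⟩, hUsub⟩ := hdense
  obtain ⟨ε, hε, hball⟩ := Metric.isOpen_iff.mp hUopen x0 hx0
  have hIoo : Set.Ioo (x0 - ε) (x0 + ε) ⊆ closure L := by
    rw [← Real.ball_eq_Ioo]
    exact fun y hy => hUsub (hball hy)
  have hclos : closure L ⊆ Set.Ici 0 :=
    closure_minimal (fun x hx => hL0 x hx) isClosed_Ici
  have hx00 : 0 ≤ x0 := hclos (hUsub hx0)
  have hα : (0:ℝ) ≤ x0 - ε := by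
    by_contra hc
    push_neg at hc
    have hmem : (x0 - ε)/2 ∈ Set.Ioo (x0 - ε) (x0 + ε) := by
      constructor <;> nlinarith
    have := hclos (hIoo hmem)
    simp only [Set.mem_Ici] at this
    nlinarith
  have hαβ : x0 - ε < x0 + ε := by linarith
  have hdense' : ∀ lo hi : ℝ, x0 - ε ≤ lo → lo < hi → hi ≤ x0 + ε →
      ∃ l, l ∈ L ∧ lo < l ∧ l < hi := by
    intro lo hi h1 h2 h3
    have hmid : (lo + hi)/2 ∈ closure L := by
      apply hIoo
      constructor <;> nlinarith
    obtain ⟨l, hlI, hlL⟩ := mem_closure_iff.mp hmid (Set.Ioo lo hi) isOpen_Ioo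
      (by constructor <;> nlinarith)
    exact ⟨l, hlL, hlI.1, hlI.2⟩
  refine ⟨IGP.nuF, IGP.muF, ?_, ?_⟩
  · -- symmetry of μ in every graph
    intro W H x y
    have e1 : gRealize2 H IGP.muF x y ↔ IGP.Smu H x y := by
      have h := IGP.Rl_mu H ![x, y]
      simp only [Matrix.cons_val_zero, Matrix.cons_val_one, Matrix.head_cons] at h
      exact h
    have e2 : gRealize2 H IGP.muF y x ↔ IGP.Smu H y x := by
      have h := IGP.Rl_mu H ![y, x]
      simp only [Matrix.cons_val_zero, Matrix.cons_val_one, Matrix.head_cons] at h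
      exact h
    rw [e1, e2, IGP.Smu, IGP.Smu]
    exact or_comm
  · intro V _ G hcard
    letI : DecidableEq V := Classical.decEq V
    letI : Fintype ↥G.edgeSet := (Set.toFinite _).fintype
    set n := Fintype.card V with hn_def
    have hn2 : 2 ≤ n := hcard
    let oVe : V ≃ Fin n := Fintype.equivFin V
    let E := ↥G.edgeSet
    -- the two index maps of an edge
    let eI : E → Fin n := fun s =>
      Sym2.lift ⟨fun a b => min (oVe a) (oVe b), fun a b => min_comm _ _⟩ s.1
    let fI : E → Fin n := fun s =>
      Sym2.lift ⟨fun a b => max (oVe a) (oVe b), fun a b => max_comm _ _⟩ s.1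
    have heIm : ∀ (a b : V) (h : s(a,b) ∈ G.edgeSet),
        eI ⟨s(a,b), h⟩ = min (oVe a) (oVe b) := fun a b h => rfl
    have hfIm : ∀ (a b : V) (h : s(a,b) ∈ G.edgeSet),
        fI ⟨s(a,b), h⟩ = max (oVe a) (oVe b) := fun a b h => rfl
    have hef : ∀ s : E, eI s < fI s := by
      intro s
      obtain ⟨a, b, hab, hs⟩ := IGP.edge_rep G s
      have h1 : eI s = min (oVe a) (oVe b) := by
        rcases s with ⟨z, hz⟩
        simp only at hs
        subst hs
        rfl
      have h2 : fI s = max (oVe a) (oVe b) := by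
        rcases s with ⟨z, hz⟩
        simp only at hs
        subst hs
        rfl
      rw [h1, h2]
      exact min_lt_max.mpr (fun hh => hab.ne (oVe.injective hh))
    have hIJf : ∀ s : E, eI s ≤ fI s := fun s => (hef s).le
    -- cardinality
    set N := 3 * Fintype.card V + 5 + G.edgeSet.ncard with hN_def
    have hm : G.edgeSet.ncard = Fintype.card E := by
      rw [← Nat.card_coe_set_eq, Nat.card_eq_fintype_card]
    letI : Fintype (IGP.TK V E) := Fintype.ofEquiv _ (IGP.tkEquiv V E).symm
    have hNcard : Fintype.card (IGP.TK V E) = N := by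
      rw [Fintype.card_congr (IGP.tkEquiv V E)]
      simp only [Fintype.card_sum, Fintype.card_unit]
      rw [hN_def, hm]
      omega
    let κ : Fin N ≃ IGP.TK V E := (Fintype.equivFinOfCardEq hNcard).symm
    -- the interval representation
    obtain ⟨ℓT, rT, hlt, hmem, hiff⟩ := IGP.buildRep (fun v => oVe v) eI fI hIJf L
      (x0 - ε) (x0 + ε) hα hαβ hdense'
    let ℓ : Fin N → ℝ := fun w => ℓT (κ w)
    let r : Fin N → ℝ := fun w => rT (κ w)
    let H : SimpleGraph (Fin N) :=
      { Adj := fun x y => x ≠ y ∧ (max (ℓ x) (ℓ y) < min (r x) (r y))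
        symm := by
          constructor
          rintro x y ⟨h1, h2⟩
          exact ⟨h1.symm, by rwa [max_comm, min_comm]⟩
        loopless := ⟨fun x h => h.1 rfl⟩ }
    have hadjH : ∀ x y, H.Adj x y ↔
        (x ≠ y ∧ (max (ℓ x) (ℓ y) < min (r x) (r y))) := fun _ _ => Iff.rfl
    have hrep : IsIntervalRep H ℓ r := by
      constructor
      · intro w
        exact hlt (κ w)
      · intro u v huv
        rw [hadjH, Set.Ico_inter_Ico, Set.nonempty_Ico]
        exact ⟨fun h => h.2, fun h => ⟨huv, h⟩⟩
    have hmemL : ∀ w, r w - ℓ w ∈ L := fun w => hmem (κ w)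
    -- the combinatorial context
    let C : IGP.Ctx V E (Fin N) n :=
      { oV := oVe, eI := eI, fI := fI, κ := κ, H := H
        hadj := by
          intro x y
          constructor
          · rintro ⟨h1, h2⟩
            have hk : κ x ≠ κ y := fun hh => h1 (κ.injective hh)
            exact ⟨hk, (hiff _ _ hk).mp h2⟩
          · rintro ⟨h1, h2⟩
            exact ⟨fun hh => h1 (congrArg κ hh), (hiff _ _ h1).mpr h2⟩
        hn := hn2
        hef := hef }
    -- realization transfer
    have hR1 : ∀ w, gRealize1 H IGP.nuF w ↔ IGP.Snu H w := by
      intro w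
      have h := IGP.Rl_nu H (fun _ => w)
      exact h
    have hR2 : ∀ x y, gRealize2 H IGP.muF x y ↔ IGP.Smu H x y := by
      intro x y
      have h := IGP.Rl_mu H ![x, y]
      simp only [Matrix.cons_val_zero, Matrix.cons_val_one, Matrix.head_cons] at h
      exact h
    have hSnu : ∀ w, gRealize1 H IGP.nuF w ↔ ∃ v, κ w = .vtx v := by
      intro w
      exact (hR1 w).trans (C.charNu w)
    -- μ decodes adjacency of G
    have hGadj : ∀ a b : V, IGP.Smu H (κ.symm (.vtx a)) (κ.symm (.vtx b)) ↔ G.Adj a b := by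
      intro a b
      constructor
      · rintro (h | h)
        · obtain ⟨s, hx, hy⟩ := (C.charHalf _ _).mp h
          have ha : a = oVe.symm (eI s) := by
            have := κ.symm.injective hx
            simpa using this
          have hb : b = oVe.symm (fI s) := by
            have := κ.symm.injective hy
            simpa using this
          obtain ⟨c, d, hcd, hs⟩ := IGP.edge_rep G s
          have h1 : eI s = min (oVe c) (oVe d) := by
            rcases s with ⟨z, hz⟩
            simp only at hs
            subst hs
            rfl
          have h2 : fI s = max (oVe c) (oVe d) := by
            rcases s with ⟨z, hz⟩
            simp only at hs
            subst hs
            rfl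
          rcases le_total (oVe c) (oVe d) with hle | hle
          · have hac : a = c := by
              rw [ha, h1, min_eq_left hle]
              simp
            have hbd : b = d := by
              rw [hb, h2, max_eq_right hle]
              simp
            rw [hac, hbd]
            exact hcd
          · have hac : a = d := by
              rw [ha, h1, min_eq_right hle]
              simp
            have hbd : b = c := by
              rw [hb, h2, max_eq_left hle]
              simp
            rw [hac, hbd]
            exact hcd.symm
        · obtain ⟨s, hx, hy⟩ := (C.charHalf _ _).mp h
          have ha : b = oVe.symm (eI s) := by
            have := κ.symm.injective hx
            simpa using this
          have hb : a = oVe.symm (fI s) := by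
            have := κ.symm.injective hy
            simpa using this
          obtain ⟨c, d, hcd, hs⟩ := IGP.edge_rep G s
          have h1 : eI s = min (oVe c) (oVe d) := by
            rcases s with ⟨z, hz⟩
            simp only at hs
            subst hs
            rfl
          have h2 : fI s = max (oVe c) (oVe d) := by
            rcases s with ⟨z, hz⟩
            simp only at hs
            subst hs
            rfl
          rcases le_total (oVe c) (oVe d) with hle | hle
          · have hac : b = c := by
              rw [ha, h1, min_eq_left hle]
              simp
            have hbd : a = d := by
              rw [hb, h2, max_eq_right hle]
              simp
            rw [hac, hbd]
            exact hcd.symm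
          · have hac : b = d := by
              rw [ha, h1, min_eq_right hle]
              simp
            have hbd : a = c := by
              rw [hb, h2, max_eq_left hle]
              simp
            rw [hac, hbd]
            exact hcd
      · intro hab
        have hne := hab.ne
        have hmemE : s(a, b) ∈ G.edgeSet := G.mem_edgeSet.mpr hab
        rcases le_total (oVe a) (oVe b) with hle | hle
        · left
          apply (C.charHalf _ _).mpr
          refine ⟨⟨s(a,b), hmemE⟩, ?_, ?_⟩
          · show κ.symm (IGP.TK.vtx a) = κ.symm (IGP.TK.vtx (oVe.symm (eI ⟨s(a,b), hmemE⟩)))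
            rw [heIm a b hmemE, min_eq_left hle]
            simp
          · show κ.symm (IGP.TK.vtx b) = κ.symm (IGP.TK.vtx (oVe.symm (fI ⟨s(a,b), hmemE⟩)))
            rw [hfIm a b hmemE, max_eq_right hle]
            simp
        · right
          apply (C.charHalf _ _).mpr
          refine ⟨⟨s(a,b), hmemE⟩, ?_, ?_⟩
          · show κ.symm (IGP.TK.vtx b) = κ.symm (IGP.TK.vtx (oVe.symm (eI ⟨s(a,b), hmemE⟩)))
            rw [heIm a b hmemE, min_eq_right hle]
            simp
          · show κ.symm (IGP.TK.vtx a) = κ.symm (IGP.TK.vtx (oVe.symm (fI ⟨s(a,b), hmemE⟩)))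
            rw [hfIm a b hmemE, max_eq_left hle]
            simp
    -- the isomorphism
    let f : V → {w : Fin N // gRealize1 H IGP.nuF w} :=
      fun a => ⟨κ.symm (.vtx a), (hSnu _).mpr ⟨a, by simp⟩⟩
    have hbij : Function.Bijective f := by
      constructor
      · intro a b h
        have h' := congrArg Subtype.val h
        have := κ.symm.injective h'
        simpa using this
      · rintro ⟨w, hw⟩
        obtain ⟨v, hv⟩ := (hSnu w).mp hw
        refine ⟨v, Subtype.ext ?_⟩
        rw [Equiv.symm_apply_eq, hv]
    refine ⟨H, ℓ, r, hrep, hmemL, ⟨⟨Equiv.ofBijective f hbij, ?_⟩⟩⟩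
    intro a b
    show (interpGraph H IGP.nuF IGP.muF).Adj (f a) (f b) ↔ G.Adj a b
    rw [interpGraph, SimpleGraph.fromRel_adj]
    constructor
    · rintro ⟨hne, h | h⟩
      · exact (hGadj a b).mp ((hR2 _ _).mp h)
      · exact ((hGadj b a).mp ((hR2 _ _).mp h)).symm
    · intro h
      exact ⟨fun hh => h.ne (hbij.1 hh), Or.inl ((hR2 _ _).mpr ((hGadj a b).mpr h))⟩
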